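/- arXiv:2002.06689 — 13 statements merged into one kernel-verified Lean document; each statement's English description precedes it below -/
import Mathlib

section
/- Let E be an infinite-dimensional normed space over ℝ and let m be a positive integer. The set NL(^m E; ℝ) of non-continuous m-linear forms on E is 2^{dim E}-lineable in L(^m E; ℝ); that is, NL(^m E; ℝ) ∪ {0} contains a linear subspace of L(^m E; ℝ) of dimension 2^{dim E}. -/
universe u

open Cardinal Filter

section Aux

variable {E : Type u} [NormedAddCommGroup E] [NormedSpace ℝ E] {ι : Type u}

/-- The linear map sending `g : ι → ℝ` to the linear functional on `E` determined on the
basis `B` (indexed by `ι × ℕ`) by `B (i, n) ↦ n * g i * ‖B (i, n)‖`. -/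
noncomputable def scaleMap (B : Module.Basis (ι × ℕ) ℝ E) : (ι → ℝ) →ₗ[ℝ] (ι × ℕ → ℝ) where
  toFun g := fun p => (p.2 : ℝ) * g p.1 * ‖B p‖
  map_add' g g' := by
    funext p
    simp only [Pi.add_apply]
    ring
  map_smul' r g := by
    funext p
    simp only [Pi.smul_apply, smul_eq_mul, RingHom.id_apply]
    ring

noncomputable def psiMap (B : Module.Basis (ι × ℕ) ℝ E) : (ι → ℝ) →ₗ[ℝ] (E →ₗ[ℝ] ℝ) :=
  (B.constr ℝ (M' := ℝ)).toLinearMap.comp (scaleMap B)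

lemma psiMap_apply (B : Module.Basis (ι × ℕ) ℝ E) (g : ι → ℝ) (i : ι) (n : ℕ) :
    psiMap B g (‖B (i, n)‖⁻¹ • B (i, n)) = n * g i := by
  have hB : ‖B (i, n)‖ ≠ 0 := norm_ne_zero_iff.mpr (B.ne_zero (i, n))
  rw [psiMap, LinearMap.comp_apply, LinearEquiv.coe_coe, map_smul, Module.Basis.constr_basis,
    scaleMap]
  simp only [LinearMap.coe_mk, AddHom.coe_mk, smul_eq_mul]
  field_simp

lemma psiMap_apply_smul (B : Module.Basis (ι × ℕ) ℝ E) (g : ι → ℝ) (i : ι) (n : ℕ) (a : ℝ) :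
    psiMap B g (a • (‖B (i, n)‖⁻¹ • B (i, n))) = a * (n * g i) := by
  rw [map_smul, psiMap_apply, smul_eq_mul]

lemma norm_unit (B : Module.Basis (ι × ℕ) ℝ E) (i : ι) (n : ℕ) :
    ‖(‖B (i, n)‖⁻¹ • B (i, n) : E)‖ = 1 := by
  have hB : ‖B (i, n)‖ ≠ 0 := norm_ne_zero_iff.mpr (B.ne_zero (i, n))
  rw [norm_smul, Real.norm_eq_abs, abs_inv, abs_norm, inv_mul_cancel₀ hB]

open Finset in
lemma prod_ite_eval (φ ψ : E →ₗ[ℝ] ℝ) {m : ℕ} (i0 : Fin m) (x : Fin m → E) :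
    (∏ j, (if j = i0 then ψ else φ) (x j))
      = ψ (x i0) * ∏ j ∈ univ.erase i0, φ (x j) := by
  rw [← Finset.mul_prod_erase univ _ (mem_univ i0), if_pos rfl]
  congr 1
  exact Finset.prod_congr rfl fun j hj => by rw [if_neg (Finset.ne_of_mem_erase hj)]

/-- `ψ ↦ (x ↦ ψ (x i0) * ∏_{j ≠ i0} φ (x j))` as a linear map into multilinear maps. -/
noncomputable def tensorAt (φ : E →ₗ[ℝ] ℝ) (m : ℕ) (i0 : Fin m) :
    (E →ₗ[ℝ] ℝ) →ₗ[ℝ] MultilinearMap ℝ (fun _ : Fin m => E) ℝ where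
  toFun ψ := (MultilinearMap.mkPiAlgebra ℝ (Fin m) ℝ).compLinearMap
      (fun j => if j = i0 then ψ else φ)
  map_add' ψ₁ ψ₂ := by
    ext x
    simp only [MultilinearMap.compLinearMap_apply, MultilinearMap.mkPiAlgebra_apply,
      MultilinearMap.add_apply]
    rw [prod_ite_eval, prod_ite_eval, prod_ite_eval, LinearMap.add_apply, add_mul]
  map_smul' r ψ := by
    ext x
    simp only [MultilinearMap.compLinearMap_apply, MultilinearMap.mkPiAlgebra_apply,
      MultilinearMap.smul_apply, RingHom.id_apply]
    rw [prod_ite_eval, prod_ite_eval, LinearMap.smul_apply, smul_eq_mul, smul_eq_mul, mul_assoc]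

lemma tensorAt_apply (φ : E →ₗ[ℝ] ℝ) (m : ℕ) (i0 : Fin m) (ψ : E →ₗ[ℝ] ℝ) (x : Fin m → E) :
    tensorAt φ m i0 ψ x = ψ (x i0) * ∏ j ∈ Finset.univ.erase i0, φ (x j) := by
  rw [tensorAt]
  simp only [LinearMap.coe_mk, AddHom.coe_mk, MultilinearMap.compLinearMap_apply,
    MultilinearMap.mkPiAlgebra_apply]
  exact prod_ite_eval φ ψ i0 x

theorem aux [Nonempty ι] (B : Module.Basis (ι × ℕ) ℝ E) {m : ℕ} (hm : 0 < m) :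
    ∃ S : Submodule ℝ (MultilinearMap ℝ (fun _ : Fin m => E) ℝ),
      Nonempty ((ι → ℝ) ≃ₗ[ℝ] S) ∧ ∀ T ∈ S, T ≠ 0 → ¬Continuous ⇑T := by
  classical
  set i0 : Fin m := ⟨0, hm⟩ with hi0
  set φ : E →ₗ[ℝ] ℝ := psiMap B (fun _ => 1) with hφ
  set L : (ι → ℝ) →ₗ[ℝ] MultilinearMap ℝ (fun _ : Fin m => E) ℝ :=
    (tensorAt φ m i0).comp (psiMap B) with hL
  obtain ⟨i₁⟩ : Nonempty ι := inferInstance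
  set c : E := ‖B (i₁, 1)‖⁻¹ • B (i₁, 1) with hc
  have hφc : φ c = 1 := by
    rw [hφ, hc, psiMap_apply B (fun _ => 1) i₁ 1]
    norm_num
  -- evaluation at points which are `c` away from coordinate `i0`
  have hpoint : ∀ (g : ι → ℝ) (y : E),
      L g (Function.update (fun _ => c) i0 y) = psiMap B g y := by
    intro g y
    rw [hL, LinearMap.comp_apply, tensorAt_apply]
    rw [Function.update_self]
    have : ∀ j ∈ Finset.univ.erase i0,
        φ (Function.update (fun _ => c) i0 y j) = 1 := by
      intro j hj
      rw [Function.update_of_ne (Finset.ne_of_mem_erase hj), hφc]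
    rw [Finset.prod_congr rfl this, Finset.prod_const_one, mul_one]
  have hinj : Function.Injective L := by
    rw [← LinearMap.ker_eq_bot, LinearMap.ker_eq_bot']
    intro g hg
    funext i
    have h1 := hpoint g (‖B (i, 1)‖⁻¹ • B (i, 1))
    rw [hg, psiMap_apply] at h1
    simpa using h1.symm
  refine ⟨LinearMap.range L, ⟨LinearEquiv.ofInjective L hinj⟩, ?_⟩
  rintro T ⟨g, rfl⟩ hT0 hcont
  have hg : g ≠ 0 := fun h => hT0 (by rw [h, map_zero])
  obtain ⟨i, hgi⟩ := Function.ne_iff.mp hg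
  rw [Pi.zero_apply] at hgi
  -- the composed map `x ↦ L g (update (fun _ => c) i0 x)` is continuous
  have hFcont : Continuous (fun y : E => L g (Function.update (fun _ => c) i0 y)) := by
    apply hcont.comp
    apply continuous_pi
    intro j
    rcases eq_or_ne j i0 with h | h
    · subst h
      simp only [Function.update_self]
      exact continuous_id
    · simp only [Function.update_of_ne h]
      exact continuous_const
  -- the sequence `z n` tends to `0` but the values are constantly `g i ≠ 0`
  set z : ℕ → E := fun n => ((n : ℝ) + 1)⁻¹ • (‖B (i, n + 1)‖⁻¹ • B (i, n + 1)) with hzdef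
  have hzn : ∀ n, ‖z n‖ = ((n : ℝ) + 1)⁻¹ := by
    intro n
    rw [hzdef]
    simp only [norm_smul, Real.norm_eq_abs, norm_unit B i (n + 1), mul_one]
    rw [abs_inv, abs_of_nonneg (by positivity)]
  have hz0 : Tendsto z atTop (nhds 0) := by
    rw [tendsto_zero_iff_norm_tendsto_zero]
    have : (fun n : ℕ => ‖z n‖) = fun n : ℕ => 1 / ((n : ℝ) + 1) := by
      funext n; rw [hzn n, one_div]
    rw [this]
    exact tendsto_one_div_add_atTop_nhds_zero_nat
  have hval : ∀ n : ℕ, L g (Function.update (fun _ => c) i0 (z n)) = g i := by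
    intro n
    rw [hpoint, hzdef]
    rw [psiMap_apply_smul]
    push_cast
    have hne : ((n : ℝ) + 1) ≠ 0 := by positivity
    field_simp
  have h1 : Tendsto (fun n => L g (Function.update (fun _ => c) i0 (z n))) atTop
      (nhds (L g (Function.update (fun _ => c) i0 0))) :=
    ((hFcont.tendsto 0).comp hz0)
  rw [hpoint g 0, map_zero] at h1
  have h2 : Tendsto (fun _ : ℕ => g i) atTop (nhds (g i)) := tendsto_const_nhds
  have := tendsto_nhds_unique (by simpa only [hval] using h1) h2
  exact hgi this.symm

end Aux

/-- For an infinite-dimensional real normed space `E` and a positive integer `m`,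
the set `NL(^m E; ℝ)` of non-continuous `m`-linear forms on `E` is `2 ^ dim E`-lineable in
`L(^m E; ℝ)`: there exists a linear subspace of the space of all `m`-linear forms, of Hamel
dimension `2 ^ dim E`, all of whose nonzero elements are non-continuous. -/
theorem statement0 (E : Type u) [NormedAddCommGroup E] [NormedSpace ℝ E]
    (hE : ¬FiniteDimensional ℝ E) (m : ℕ) (hm : 0 < m) :
    ∃ S : Submodule ℝ (MultilinearMap ℝ (fun _ : Fin m => E) ℝ),
      Module.rank ℝ ↥S = 2 ^ Module.rank ℝ E ∧
      ∀ T ∈ S, T ≠ 0 → ¬Continuous ⇑T := by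
  classical
  have hrank : ℵ₀ ≤ Module.rank ℝ E := by
    by_contra h
    push_neg at h
    exact hE (Module.rank_lt_aleph0_iff.mp h)
  obtain ⟨⟨ι, B⟩⟩ := Module.Free.exists_basis (R := ℝ) (M := E)
  have hι : #ι = Module.rank ℝ E := B.mk_eq_rank''
  have hιinf : ℵ₀ ≤ #ι := hι ▸ hrank
  haveI : Infinite ι := Cardinal.aleph0_le_mk_iff.mp hιinf
  obtain ⟨q⟩ : Nonempty (ι ≃ ι × ℕ) := by
    rw [← Cardinal.eq]
    rw [Cardinal.mk_prod, Cardinal.mk_nat, Cardinal.lift_aleph0, Cardinal.lift_uzero,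
      mul_comm, Cardinal.aleph0_mul_eq hιinf]
  obtain ⟨S, ⟨e⟩, hS⟩ := aux (B.reindex q) hm
  refine ⟨S, ?_, hS⟩
  rw [← e.rank_eq, rank_fun_infinite, Cardinal.mk_arrow, Cardinal.mk_real,
    Cardinal.lift_continuum, Cardinal.lift_uzero, ← Cardinal.two_power_aleph0,
    ← Cardinal.power_mul, Cardinal.aleph0_mul_eq hιinf, hι]
end

section
/- If E is an infinite-dimensional Banach space over ℝ, then the cardinality of E equals the Hamel dimension of E, i.e. card(E) = dim(E). -/
universe u

open Cardinal Set

namespace Statement1Aux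

variable {E : Type u} [NormedAddCommGroup E] [NormedSpace ℝ E]

/-- A continuous functional vanishing on a finite-dimensional subspace and equal to `1`
at a point outside it. -/
lemma exists_sep {S : Submodule ℝ E} [FiniteDimensional ℝ S] {x : E} (hx : x ∉ S) :
    ∃ f : E →L[ℝ] ℝ, (∀ y ∈ S, f y = 0) ∧ f x = 1 := by
  have hSc : IsClosed (S : Set E) := S.closed_of_finiteDimensional
  obtain ⟨f, c, hfS, hfx⟩ := geometric_hahn_banach_closed_point S.convex hSc hx
  have hf0 : ∀ y ∈ S, f y = 0 := by
    intro y hy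
    by_contra h
    have h1 := hfS (((c + 1) / f y) • y) (S.smul_mem _ hy)
    rw [map_smul, smul_eq_mul, div_mul_cancel₀ _ h] at h1
    linarith
  have hc : 0 < c := by
    have h0 := hfS 0 S.zero_mem
    rwa [map_zero] at h0
  have hfx0 : f x ≠ 0 := ne_of_gt (hc.trans hfx)
  refine ⟨(f x)⁻¹ • f, fun y hy => ?_, ?_⟩
  · simp [hf0 y hy]
  · simp [inv_mul_cancel₀ hfx0]

/-- One can extend any finite biorthogonal-ish family: there is a vector killed by all old
functionals and a functional killing all old vectors, pairing to `1`. -/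
lemma step_exists (hE : ¬FiniteDimensional ℝ E) {n : ℕ} (p : Fin n → E × (E →L[ℝ] ℝ)) :
    ∃ q : E × (E →L[ℝ] ℝ), (∀ i, (p i).2 q.1 = 0) ∧ (∀ i, q.2 (p i).1 = 0) ∧ q.2 q.1 = 1 := by
  classical
  set S : Submodule ℝ E := Submodule.span ℝ (Set.range fun i => (p i).1) with hS
  haveI : FiniteDimensional ℝ S := FiniteDimensional.span_of_finite ℝ (Set.finite_range _)
  set Φ : E →ₗ[ℝ] (Fin n → ℝ) := LinearMap.pi (fun i => ((p i).2 : E →ₗ[ℝ] ℝ)) with hΦ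
  have hker : ¬ (LinearMap.ker Φ ≤ S) := by
    intro hle
    apply hE
    haveI : FiniteDimensional ℝ (LinearMap.ker Φ) := Submodule.finiteDimensional_of_le hle
    haveI : FiniteDimensional ℝ (E ⧸ LinearMap.ker Φ) :=
      FiniteDimensional.of_injective Φ.quotKerEquivRange.toLinearMap
        Φ.quotKerEquivRange.injective
    rw [FiniteDimensional, ← Module.rank_lt_aleph0_iff,
      ← Submodule.rank_quotient_add_rank (LinearMap.ker Φ)]
    exact Cardinal.add_lt_aleph0 (Module.rank_lt_aleph0 _ _) (Module.rank_lt_aleph0 _ _)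
  obtain ⟨x, hxk, hxS⟩ := SetLike.not_le_iff_exists.mp hker
  obtain ⟨f, hf0, hfx⟩ := exists_sep hxS
  refine ⟨(x, f), fun i => ?_, fun i => ?_, hfx⟩
  · have := congrFun ((LinearMap.mem_ker).mp hxk) i
    simpa [hΦ] using this
  · exact hf0 _ (Submodule.subset_span ⟨i, rfl⟩)

/-- The next pair in the biorthogonal construction. -/
noncomputable def nextPair (hE : ¬FiniteDimensional ℝ E) {n : ℕ}
    (p : Fin n → E × (E →L[ℝ] ℝ)) : E × (E →L[ℝ] ℝ) :=
  (step_exists hE p).choose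

lemma nextPair_spec (hE : ¬FiniteDimensional ℝ E) {n : ℕ} (p : Fin n → E × (E →L[ℝ] ℝ)) :
    (∀ i, (p i).2 (nextPair hE p).1 = 0) ∧ (∀ i, (nextPair hE p).2 (p i).1 = 0) ∧
      (nextPair hE p).2 (nextPair hE p).1 = 1 :=
  (step_exists hE p).choose_spec

/-- The finite stages of the biorthogonal construction. -/
noncomputable def bioFam (hE : ¬FiniteDimensional ℝ E) : ∀ n : ℕ, Fin n → E × (E →L[ℝ] ℝ)
  | 0 => Fin.elim0
  | (n + 1) => Fin.snoc (bioFam hE n) (nextPair hE (bioFam hE n))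

/-- The biorthogonal sequence of pairs. -/
noncomputable def pairSeq (hE : ¬FiniteDimensional ℝ E) (n : ℕ) : E × (E →L[ℝ] ℝ) :=
  bioFam hE (n + 1) (Fin.last n)

lemma bioFam_eq_pairSeq (hE : ¬FiniteDimensional ℝ E) :
    ∀ n (i : Fin n), bioFam hE n i = pairSeq hE i.1 := by
  intro n
  induction n with
  | zero => exact fun i => i.elim0
  | succ n ih =>
    intro i
    refine Fin.lastCases ?_ (fun j => ?_) i
    · rfl
    · have h1 : bioFam hE (n + 1) (Fin.castSucc j) = bioFam hE n j := by
        simp [bioFam]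
      rw [h1, ih j]
      rfl

lemma bioFam_bio (hE : ¬FiniteDimensional ℝ E) :
    ∀ n (i j : Fin n), (bioFam hE n i).2 ((bioFam hE n j).1) = if i = j then 1 else 0 := by
  intro n
  induction n with
  | zero => exact fun i => i.elim0
  | succ n ih =>
    intro i j
    obtain ⟨h1, h2, h3⟩ := nextPair_spec hE (bioFam hE n)
    refine Fin.lastCases ?_ (fun i' => ?_) i
    · refine Fin.lastCases ?_ (fun j' => ?_) j
      · simpa [bioFam] using h3
      · have : (Fin.last n) ≠ Fin.castSucc j' := (Fin.castSucc_lt_last j').ne'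
        simpa [bioFam, this] using h2 j'
    · refine Fin.lastCases ?_ (fun j' => ?_) j
      · have : Fin.castSucc i' ≠ Fin.last n := (Fin.castSucc_lt_last i').ne
        simpa [bioFam, this] using h1 i'
      · have := ih i' j'
        simpa [bioFam, Fin.castSucc_inj] using this

lemma pairSeq_bio (hE : ¬FiniteDimensional ℝ E) (k n : ℕ) :
    (pairSeq hE k).2 ((pairSeq hE n).1) = if k = n then 1 else 0 := by
  set m := max k n + 1 with hm
  have hk : k < m := lt_of_le_of_lt (le_max_left _ _) (Nat.lt_succ_self _)
  have hn : n < m := lt_of_le_of_lt (le_max_right _ _) (Nat.lt_succ_self _)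
  have h1 : bioFam hE m ⟨k, hk⟩ = pairSeq hE k := bioFam_eq_pairSeq hE m ⟨k, hk⟩
  have h2 : bioFam hE m ⟨n, hn⟩ = pairSeq hE n := bioFam_eq_pairSeq hE m ⟨n, hn⟩
  have := bioFam_bio hE m ⟨k, hk⟩ ⟨n, hn⟩
  rw [h1, h2] at this
  simpa [Fin.mk.injEq] using this

end Statement1Aux

open Statement1Aux in
/-- The continuum is at most the Hamel dimension of an infinite-dimensional real Banach space. -/
lemma continuum_le_rank_of_banach {E : Type u} [NormedAddCommGroup E] [NormedSpace ℝ E]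
    [CompleteSpace E] (hE : ¬FiniteDimensional ℝ E) :
    Cardinal.continuum ≤ Module.rank ℝ E := by
  classical
  set x : ℕ → E := fun n => (pairSeq hE n).1 with hx
  set f : ℕ → E →L[ℝ] ℝ := fun n => (pairSeq hE n).2 with hf
  have hbio : ∀ k n, f k (x n) = if k = n then 1 else 0 := fun k n => pairSeq_bio hE k n
  set c : ℕ → ℝ := fun n => ((2 : ℝ) ^ n * max 1 ‖x n‖)⁻¹ with hcdef
  have hc : ∀ n, 0 < c n := by
    intro n
    have : (0:ℝ) < (2 : ℝ) ^ n * max 1 ‖x n‖ := by positivity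
    exact inv_pos.mpr this
  set z : ℕ → E := fun n => c n • x n with hz
  have hznorm : ∀ n, ‖z n‖ ≤ (1 / 2) ^ n := by
    intro n
    have hxle : ‖x n‖ ≤ max 1 ‖x n‖ := le_max_right _ _
    have hmaxpos : (0:ℝ) < max 1 ‖x n‖ := lt_of_lt_of_le one_pos (le_max_left _ _)
    have h2n : (0:ℝ) < (2:ℝ) ^ n := by positivity
    calc ‖z n‖ = ‖x n‖ / ((2 : ℝ) ^ n * max 1 ‖x n‖) := by
          rw [hz]
          simp only [norm_smul, Real.norm_eq_abs, abs_of_pos (hc n)]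
          rw [hcdef, div_eq_inv_mul]
      _ ≤ (max 1 ‖x n‖) / ((2 : ℝ) ^ n * max 1 ‖x n‖) := by
          exact div_le_div_of_nonneg_right hxle (by positivity)
      _ = (1 / 2) ^ n := by
          rw [mul_comm, ← div_div, div_self hmaxpos.ne']
          rw [one_div, one_div, inv_pow]
  have hfz : ∀ k n, f k (z n) = if k = n then c n else 0 := by
    intro k n
    rw [hz]
    simp only [map_smul, smul_eq_mul, hbio k n]
    by_cases h : k = n <;> simp [h]
  have hsum : ∀ t : Ioo (0:ℝ) 1, Summable fun n => (t:ℝ) ^ n • z n := by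
    intro t
    refine Summable.of_norm_bounded summable_geometric_two (fun n => ?_)
    rw [norm_smul, Real.norm_eq_abs, abs_pow, abs_of_pos t.2.1]
    calc (t:ℝ) ^ n * ‖z n‖ ≤ 1 * ((1/2) ^ n) := by
          apply mul_le_mul (pow_le_one₀ t.2.1.le t.2.2.le) (hznorm n) (norm_nonneg _) zero_le_one
      _ = (1/2) ^ n := one_mul _
  set g : Ioo (0:ℝ) 1 → E := fun t => ∑' n, (t:ℝ) ^ n • z n with hg
  have hfg : ∀ (t : Ioo (0:ℝ) 1) (k : ℕ), f k (g t) = (t:ℝ) ^ k * c k := by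
    intro t k
    rw [hg]
    rw [ContinuousLinearMap.map_tsum _ (hsum t)]
    rw [tsum_eq_single k]
    · rw [map_smul, smul_eq_mul, hfz k k, if_pos rfl]
    · intro n hn
      rw [map_smul, smul_eq_mul, hfz k n, if_neg (Ne.symm hn), mul_zero]
  have hli : LinearIndependent ℝ g := by
    rw [linearIndependent_iff']
    intro s a hsa i hi
    have hA : ∀ k : ℕ, ∑ j ∈ s, a j * (j:ℝ) ^ k = 0 := by
      intro k
      have h1 := congrArg (f k) hsa
      rw [map_sum, map_zero] at h1
      simp only [map_smul, smul_eq_mul, hfg] at h1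
      have h2 : (∑ j ∈ s, a j * (j:ℝ) ^ k) * c k = 0 := by
        rw [Finset.sum_mul]
        calc ∑ j ∈ s, a j * (j:ℝ) ^ k * c k = ∑ j ∈ s, a j * ((j:ℝ) ^ k * c k) :=
              Finset.sum_congr rfl fun j _ => by ring
          _ = 0 := h1
      rcases mul_eq_zero.mp h2 with h | h
      · exact h
      · exact absurd h (hc k).ne'
    have hP : ∀ P : Polynomial ℝ, ∑ j ∈ s, a j * P.eval (j:ℝ) = 0 := by
      intro P
      have : ∀ j : Ioo (0:ℝ) 1, P.eval (j:ℝ) =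
          ∑ k ∈ Finset.range (P.natDegree + 1), P.coeff k * (j:ℝ) ^ k := fun j => by
        rw [Polynomial.eval_eq_sum_range]
      simp_rw [this, Finset.mul_sum]
      rw [Finset.sum_comm]
      refine Finset.sum_eq_zero fun k _ => ?_
      have := hA k
      calc ∑ j ∈ s, a j * (P.coeff k * (j:ℝ) ^ k)
          = P.coeff k * ∑ j ∈ s, a j * (j:ℝ) ^ k := by
            rw [Finset.mul_sum]; exact Finset.sum_congr rfl fun j _ => by ring
        _ = 0 := by rw [hA k, mul_zero]
    have hinj : Set.InjOn (fun j : Ioo (0:ℝ) 1 => (j:ℝ)) s := fun u _ v _ h => Subtype.ext h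
    have hL := hP (Lagrange.basis s (fun j : Ioo (0:ℝ) 1 => (j:ℝ)) i)
    rw [Finset.sum_eq_single i] at hL
    · simpa only [Lagrange.eval_basis_self hinj hi, mul_one] using hL
    · intro j hj hji
      simp only [Lagrange.eval_basis_of_ne hji.symm hj, mul_zero]
    · intro h; exact absurd hi h
  have hcard := hli.cardinal_lift_le_rank
  rw [Cardinal.mk_Ioo_real zero_lt_one, Cardinal.lift_continuum, Cardinal.lift_uzero] at hcard
  exact hcard

/-- If `E` is an infinite-dimensional real Banach space, then the cardinality of
`E` equals its Hamel dimension: `card E = dim E`. -/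
theorem statement1 (E : Type u) [NormedAddCommGroup E] [NormedSpace ℝ E] [CompleteSpace E]
    (hE : ¬FiniteDimensional ℝ E) :
    Cardinal.mk E = Module.rank ℝ E := by
  have hcont : Cardinal.continuum ≤ Module.rank ℝ E := continuum_le_rank_of_banach hE
  have hrank : Cardinal.aleph0 ≤ Module.rank ℝ E :=
    le_trans Cardinal.aleph0_le_continuum hcont
  let B := Module.Basis.ofVectorSpace ℝ E
  haveI : Infinite (Module.Basis.ofVectorSpaceIndex ℝ E) := by
    rw [Cardinal.infinite_iff, B.mk_eq_rank'']
    exact hrank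
  have hmk : Cardinal.mk E = Cardinal.mk (Module.Basis.ofVectorSpaceIndex ℝ E →₀ ℝ) :=
    B.repr.toEquiv.cardinal_eq
  rw [hmk, Cardinal.mk_finsupp_lift_of_infinite, Cardinal.mk_real, Cardinal.lift_continuum,
    Cardinal.lift_uzero, B.mk_eq_rank'']
  exact max_eq_left (hcont.trans (le_refl _))
end

section
/- Let E be an infinite-dimensional normed space over ℝ, let F be a nonzero normed space over ℝ, and let m be a positive integer. Then card(L(^m E; F)) = (card F)^{dim E}. -/
universe u v

/-- For an infinite-dimensional real normed space `E`, a nonzero real normed space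
`F` and a positive integer `m`, the cardinality of the space `L(^m E; F)` of all `m`-linear
operators from `E × ⋯ × E` to `F` is `(card F) ^ (dim E)` (cardinal exponentiation, with
universe lifts to compare cardinals). -/
theorem statement2 (E : Type u) (F : Type v) [NormedAddCommGroup E] [NormedSpace ℝ E]
    [NormedAddCommGroup F] [NormedSpace ℝ F] [Nontrivial F]
    (hE : ¬FiniteDimensional ℝ E) (m : ℕ) (hm : 0 < m) :
    Cardinal.mk (MultilinearMap ℝ (fun _ : Fin m => E) F) =
      Cardinal.lift.{u} (Cardinal.mk F) ^ Cardinal.lift.{v} (Module.rank ℝ E) := by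
  classical
  obtain ⟨n, rfl⟩ : ∃ n, m = n + 1 := ⟨m - 1, (Nat.succ_pred_eq_of_pos hm).symm⟩
  set ι := Module.Free.ChooseBasisIndex ℝ E with hι
  let b : Module.Basis ι ℝ E := Module.Free.chooseBasis ℝ E
  have hrank : Module.rank ℝ E = Cardinal.mk ι :=
    Module.Free.rank_eq_card_chooseBasisIndex ℝ E
  have hℵ : Cardinal.aleph0 ≤ Cardinal.mk ι := by
    by_contra h
    push_neg at h
    rw [← hrank] at h
    exact hE (Module.rank_lt_aleph0_iff.mp h)
  have hne : Nonempty ι := by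
    rw [← Cardinal.mk_ne_zero_iff]
    intro h0
    rw [h0] at hℵ
    exact (Cardinal.aleph0_ne_zero) (le_antisymm (le_of_le_of_eq hℵ rfl) zero_le ▸ rfl)
  obtain ⟨i₀⟩ := hne
  let φ : E →ₗ[ℝ] ℝ := b.coord i₀
  have hφ : φ (b i₀) = 1 := by simp [φ]
  -- the linear injection `F → MultilinearMap ℝ (fun _ : Fin n => E) F`
  let T : F →ₗ[ℝ] MultilinearMap ℝ (fun _ : Fin n => E) F :=
    { toFun := fun z => (MultilinearMap.mkPiRing ℝ (Fin n) z).compLinearMap (fun _ => φ)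
      map_add' := by
        intro x y
        ext v
        simp [smul_add]
      map_smul' := by
        intro c x
        ext v
        simp only [MultilinearMap.compLinearMap_apply, MultilinearMap.mkPiRing_apply,
          MultilinearMap.smul_apply]
        rw [smul_comm]
        rfl }
  have hT : Function.Injective T := by
    intro x y hxy
    have := congrFun (congrArg DFunLike.coe hxy) (fun _ => b i₀)
    simpa [T, hφ] using this
  -- lower bound
  have hlow : Cardinal.lift.{u} (Cardinal.mk F) ^ Cardinal.lift.{v} (Module.rank ℝ E) ≤
      Cardinal.mk (MultilinearMap ℝ (fun _ : Fin (n + 1) => E) F) := by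
    rw [hrank, ← Cardinal.mk_arrow]
    refine ⟨⟨fun f => (multilinearCurryLeftEquiv ℝ (fun _ : Fin (n + 1) => E) F).symm
      (T ∘ₗ b.constr ℝ f), ?_⟩⟩
    intro f g hfg
    have h1 : T ∘ₗ b.constr ℝ f = T ∘ₗ b.constr ℝ g :=
      (multilinearCurryLeftEquiv ℝ (fun _ : Fin (n + 1) => E) F).symm.injective hfg
    funext i
    have h2 : T (b.constr ℝ f (b i)) = T (b.constr ℝ g (b i)) :=
      congrFun (congrArg DFunLike.coe h1) (b i)
    have h3 := hT h2
    rwa [b.constr_basis, b.constr_basis] at h3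
  -- upper bound
  have hup : Cardinal.mk (MultilinearMap ℝ (fun _ : Fin (n + 1) => E) F) ≤
      Cardinal.lift.{u} (Cardinal.mk F) ^ Cardinal.lift.{v} (Module.rank ℝ E) := by
    have step1 : Cardinal.mk (MultilinearMap ℝ (fun _ : Fin (n + 1) => E) F) ≤
        Cardinal.mk ((Fin (n + 1) → ι) → F) := by
      refine ⟨⟨fun T v => T (fun i => b (v i)), ?_⟩⟩
      intro f g hfg
      exact Module.Basis.ext_multilinear (fun _ => b) fun v => congrFun hfg v
    have step2 : Cardinal.mk (Fin (n + 1) → ι) = Cardinal.mk ι := by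
      rw [Cardinal.mk_arrow]
      simp only [Cardinal.mk_fin, Cardinal.lift_natCast, Cardinal.lift_id']
      rw [Cardinal.power_natCast]
      exact Cardinal.power_nat_eq hℵ (by omega)
    calc Cardinal.mk (MultilinearMap ℝ (fun _ : Fin (n + 1) => E) F)
        ≤ Cardinal.mk ((Fin (n + 1) → ι) → F) := step1
      _ = Cardinal.lift.{u} (Cardinal.mk F) ^ Cardinal.lift.{v} (Cardinal.mk (Fin (n + 1) → ι)) :=
          Cardinal.mk_arrow _ _
      _ = Cardinal.lift.{u} (Cardinal.mk F) ^ Cardinal.lift.{v} (Module.rank ℝ E) := by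
          rw [step2, hrank]
  exact le_antisymm hup hlow
end

section
/- Let E be an infinite-dimensional Banach space over ℝ and let m be a positive integer. Then the Hamel dimension of L(^m E; ℝ) equals 2^{dim E}; in particular dim L(^m E; ℝ) = card(L(^m E; ℝ)) = 𝔠^{dim E} = 2^{dim E}. -/
universe u

open Cardinal

/-- For an infinite-dimensional real Banach space `E` and a positive integer `m`,
the Hamel dimension of `L(^m E; ℝ)` equals `2 ^ dim E`; in particular
`dim L(^m E; ℝ) = card (L(^m E; ℝ)) = 𝔠 ^ dim E = 2 ^ dim E`. -/
theorem statement3 (E : Type u) [NormedAddCommGroup E] [NormedSpace ℝ E] [CompleteSpace E]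
    (hE : ¬FiniteDimensional ℝ E) (m : ℕ) (hm : 0 < m) :
    Module.rank ℝ (MultilinearMap ℝ (fun _ : Fin m => E) ℝ) = 2 ^ Module.rank ℝ E ∧
    Cardinal.mk (MultilinearMap ℝ (fun _ : Fin m => E) ℝ) = 2 ^ Module.rank ℝ E ∧
    Cardinal.continuum ^ Module.rank ℝ E = 2 ^ Module.rank ℝ E := by
  classical
  haveI : NeZero m := ⟨hm.ne'⟩
  set d := Module.rank ℝ E with hdd
  have hd0 : ℵ₀ ≤ d := by
    by_contra h
    exact hE (Module.rank_lt_aleph0_iff.mp (not_le.mp h))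
  -- third statement
  have key3 : Cardinal.continuum ^ d = 2 ^ d := by
    rw [← Cardinal.two_power_aleph0, ← Cardinal.power_mul, Cardinal.aleph0_mul_eq hd0]
  -- basis of E
  let b := Module.Basis.ofVectorSpace ℝ E
  set ι := Module.Basis.ofVectorSpaceIndex ℝ E
  have hι : #ι = d := b.mk_eq_rank''
  have hι0 : ℵ₀ ≤ #ι := hι ▸ hd0
  haveI : Nonempty ι := by
    rw [← Cardinal.mk_ne_zero_iff]
    intro h
    rw [h] at hι0
    exact (Cardinal.aleph0_pos.trans_le hι0).ne' rfl
  -- upper bound on cardinality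
  have hmk_le : #(MultilinearMap ℝ (fun _ : Fin m => E) ℝ) ≤ 2 ^ d := by
    have inj : Function.Injective
        (fun (f : MultilinearMap ℝ (fun _ : Fin m => E) ℝ) (v : Fin m → ι) =>
          f (fun i => b (v i))) := by
      intro f g h
      exact Module.Basis.ext_multilinear (fun _ => b) fun v => congrFun h v
    calc #(MultilinearMap ℝ (fun _ : Fin m => E) ℝ)
        ≤ #((Fin m → ι) → ℝ) := Cardinal.mk_le_of_injective inj
      _ = Cardinal.continuum ^ (#ι ^ (m : Cardinal.{u})) := by
          rw [Cardinal.mk_arrow, Cardinal.mk_arrow]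
          simp [Cardinal.mk_real, Cardinal.lift_continuum]
      _ = Cardinal.continuum ^ #ι := by
          rw [Cardinal.power_natCast, Cardinal.power_nat_eq hι0 hm]
      _ = 2 ^ d := by rw [hι, key3]
  -- lower bound on rank via the dual
  obtain ⟨i₀⟩ := (inferInstance : Nonempty ι)
  let φ : E →ₗ[ℝ] ℝ := b.coord i₀
  let T := (MultilinearMap.compLinearMapMultilinear
      (R := ℝ) (ι := Fin m) (M₁ := fun _ : Fin m => E) (M₁' := fun _ : Fin m => ℝ)
      (M₂ := ℝ)).toLinearMap (fun _ => φ) 0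
  let L : (E →ₗ[ℝ] ℝ) →ₗ[ℝ] MultilinearMap ℝ (fun _ : Fin m => E) ℝ :=
    T.flip (MultilinearMap.mkPiAlgebra ℝ (Fin m) ℝ)
  have hLapp : ∀ (f : E →ₗ[ℝ] ℝ) (v : Fin m → E),
      L f v = ∏ i, (Function.update (fun _ : Fin m => φ) 0 f i) (v i) := by
    intro f v
    simp [L, T, MultilinearMap.compLinearMap_apply, MultilinearMap.mkPiAlgebra_apply]
  have hLinj : Function.Injective L := by
    rw [injective_iff_map_eq_zero]
    intro f hf
    ext x
    have h1 : L f (Function.update (fun _ : Fin m => (b i₀ : E)) 0 x) = 0 := by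
      rw [hf]; rfl
    rw [hLapp] at h1
    rw [Finset.prod_eq_single (0 : Fin m)] at h1
    · simpa using h1
    · intro i _ hi
      simp only [Function.update_of_ne hi]
      simp [φ, Module.Basis.coord_apply, Module.Basis.repr_self]
    · simp
  have hrank_dual : Module.rank ℝ (E →ₗ[ℝ] ℝ) = 2 ^ d := by
    rw [rank_dual_eq_card_dual_of_aleph0_le_rank hd0]
    have e := b.constr (M' := ℝ) ℝ
    rw [← e.toEquiv.cardinal_eq, Cardinal.mk_arrow]
    simp [Cardinal.mk_real, Cardinal.lift_continuum, hι, key3]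
  have hrank_ge : 2 ^ d ≤ Module.rank ℝ (MultilinearMap ℝ (fun _ : Fin m => E) ℝ) :=
    hrank_dual ▸ LinearMap.rank_le_of_injective L hLinj
  have hrank_le : Module.rank ℝ (MultilinearMap ℝ (fun _ : Fin m => E) ℝ) ≤ 2 ^ d :=
    ((rank_le_card _ _)).trans hmk_le
  have hmk_ge : 2 ^ d ≤ #(MultilinearMap ℝ (fun _ : Fin m => E) ℝ) :=
    hrank_ge.trans ((rank_le_card _ _))
  exact ⟨le_antisymm hrank_le hrank_ge, le_antisymm hmk_le hmk_ge, key3⟩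
end

section
/- Let E be an infinite-dimensional normed space over ℝ, let F be a nonzero normed space over ℝ, and let m be a positive integer. The set NL(^m E; F) of non-continuous m-linear operators is max{2^{dim E}, dim F}-lineable in L(^m E; F). -/
universe u v

open Cardinal

/-- For an infinite-dimensional real normed space `E`, a nonzero real normed space
`F` and a positive integer `m`, the set `NL(^m E; F)` of non-continuous `m`-linear operators is
`max {2 ^ dim E, dim F}`-lineable in `L(^m E; F)` (universe lifts are used to compare the
cardinals). -/
theorem statement4 (E : Type u) (F : Type v) [NormedAddCommGroup E] [NormedSpace ℝ E]
    [NormedAddCommGroup F] [NormedSpace ℝ F] [Nontrivial F]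
    (hE : ¬FiniteDimensional ℝ E) (m : ℕ) (hm : 0 < m) :
    ∃ S : Submodule ℝ (MultilinearMap ℝ (fun _ : Fin m => E) F),
      Module.rank ℝ ↥S =
        max (Cardinal.lift.{v} (2 ^ Module.rank ℝ E)) (Cardinal.lift.{u} (Module.rank ℝ F)) ∧
      ∀ T ∈ S, T ≠ 0 → ¬Continuous ⇑T := by
  classical
  obtain ⟨k, rfl⟩ : ∃ k, m = k + 1 := ⟨m - 1, (Nat.succ_pred_eq_of_pos hm).symm⟩
  set ιs := Module.Basis.ofVectorSpaceIndex ℝ E with hιs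
  set b : Module.Basis ιs ℝ E := Module.Basis.ofVectorSpace ℝ E with hb
  have hrk : ℵ₀ ≤ Module.rank ℝ E := by
    by_contra h
    exact hE (Module.rank_lt_aleph0_iff.mp (not_le.mp h))
  have hmkι : #ιs = Module.rank ℝ E := b.mk_eq_rank''
  haveI hinf : Infinite ιs := Cardinal.infinite_iff.mpr (by rw [hmkι]; exact hrk)
  obtain ⟨i₀⟩ : Nonempty ιs := inferInstance
  obtain ⟨v₀, hv₀⟩ : ∃ v : F, v ≠ 0 := exists_ne 0
  obtain ⟨c⟩ : Nonempty ((ιs ⊕ ιs) × ℕ ≃ ιs) := by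
    apply Cardinal.eq.mp
    have hι : ℵ₀ ≤ #ιs := by rw [hmkι]; exact hrk
    have h1 : #(ιs ⊕ ιs) = #ιs := by
      rw [Cardinal.mk_sum, Cardinal.lift_id]
      exact Cardinal.add_eq_self hι
    rw [Cardinal.mk_prod, Cardinal.lift_uzero, h1, Cardinal.mk_nat, Cardinal.lift_aleph0]
    exact Cardinal.mul_eq_left hι hι Cardinal.aleph0_ne_zero
  -- the coefficients and values used to build linear maps
  set coef : ιs → ℝ := fun j => (((c.symm j).2 : ℝ) + 1) * ‖(b j : E)‖ with hcoefdef
  have hbne : ∀ j, (b j : E) ≠ 0 := fun j => b.ne_zero j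
  have hcoef_pos : ∀ j, 0 < coef j := by
    intro j
    apply mul_pos
    · positivity
    · exact norm_pos_iff.mpr (hbne j)
  set val : (ιs → ℝ) × F → ιs → F :=
    fun w j => Sum.elim (fun i => w.1 i • v₀) (fun _ => w.2) (c.symm j).1 with hvaldef
  set Mf : (ιs → ℝ) × F → (E →ₗ[ℝ] F) :=
    fun w => b.constr ℝ (fun j => coef j • val w j) with hMfdef
  have hMf_basis : ∀ w j, Mf w (b j) = coef j • val w j := by
    intro w j
    simp [hMfdef, Module.Basis.constr_basis]
  have hval_add : ∀ w w' j, val (w + w') j = val w j + val w' j := by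
    intro w w' j
    rcases h : (c.symm j).1 with i | i <;> simp [hvaldef, h, add_smul]
  have hval_smul : ∀ (r : ℝ) w j, val (r • w) j = r • val w j := by
    intro r w j
    rcases h : (c.symm j).1 with i | i <;> simp [hvaldef, h, mul_smul]
  have hMf_add : ∀ w w', Mf w + Mf w' = Mf (w + w') := by
    intro w w'
    simp only [hMfdef]
    rw [← map_add]
    congr 1
    funext j
    simp [hval_add, smul_add]
  have hMf_smul : ∀ (r : ℝ) w, r • Mf w = Mf (r • w) := by
    intro r w
    simp only [hMfdef]
    rw [← map_smul]
    congr 1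
    funext j
    simp only [hval_smul, Pi.smul_apply]
    rw [smul_comm]
  -- the multilinear extension
  set f₀ : E →ₗ[ℝ] ℝ := b.coord i₀ with hf₀def
  have hf₀ : f₀ (b i₀) = 1 := by
    simp [hf₀def, Module.Basis.coord_apply]
  set Q : MultilinearMap ℝ (fun _ : Fin k => E) ℝ :=
    (MultilinearMap.mkPiAlgebra ℝ (Fin k) ℝ).compLinearMap (fun _ => f₀) with hQdef
  set Φ : (E →ₗ[ℝ] F) → MultilinearMap ℝ (fun _ : Fin (k+1) => E) F :=
    fun L => MultilinearMap.uncurryRight (M := fun _ : Fin (k+1) => E)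
      ((LinearMap.toSpanSingleton ℝ (E →ₗ[ℝ] F) L).compMultilinearMap Q) with hΦdef
  have hΦ_apply : ∀ L (x : Fin (k+1) → E), Φ L x = Q (Fin.init x) • L (x (Fin.last k)) := by
    intro L x
    rfl
  set ins : E → (Fin (k+1) → E) := fun z => Fin.snoc (fun _ => (b i₀ : E)) z with hinsdef
  have hins_eval : ∀ L z, Φ L (ins z) = L z := by
    intro L z
    rw [hΦ_apply]
    have h1 : Fin.init (ins z) = fun _ => (b i₀ : E) := Fin.init_snoc _ _
    have h2 : ins z (Fin.last k) = z := Fin.snoc_last _ _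
    rw [h1, h2]
    have hQ1 : Q (fun _ => (b i₀ : E)) = 1 := by
      simp [hQdef, MultilinearMap.compLinearMap_apply, MultilinearMap.mkPiAlgebra_apply, hf₀]
    rw [hQ1, one_smul]
  have hins_cont : Continuous ins := by
    apply continuous_pi
    intro i
    refine Fin.lastCases ?_ ?_ i
    · simp only [hinsdef, Fin.snoc_last]
      exact continuous_id
    · intro j
      simp only [hinsdef, Fin.snoc_castSucc]
      exact continuous_const
  have hΦ_add : ∀ L L', Φ (L + L') = Φ L + Φ L' := by
    intro L L'
    ext x
    simp [hΦ_apply, smul_add]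
  have hΦ_smul : ∀ (r : ℝ) L, Φ (r • L) = r • Φ L := by
    intro r L
    ext x
    simp only [hΦ_apply, LinearMap.smul_apply, MultilinearMap.smul_apply]
    rw [smul_comm]
  set J : ((ιs → ℝ) × F) →ₗ[ℝ] MultilinearMap ℝ (fun _ : Fin (k+1) => E) F :=
    { toFun := fun w => Φ (Mf w),
      map_add' := fun w w' => by
        show Φ (Mf (w + w')) = Φ (Mf w) + Φ (Mf w')
        rw [← hMf_add, hΦ_add]
      map_smul' := fun r w => by
        show Φ (Mf (r • w)) = r • Φ (Mf w)
        rw [← hMf_smul, hΦ_smul] } with hJdef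
  have hJ_apply : ∀ w, J w = Φ (Mf w) := fun w => rfl
  -- J w = 0 → w = 0
  have hkey : ∀ w, J w = 0 → w = 0 := by
    intro w hw
    have hM0 : Mf w = 0 := by
      apply LinearMap.ext
      intro z
      have : Φ (Mf w) (ins z) = 0 := by rw [← hJ_apply, hw]; rfl
      rw [hins_eval] at this
      simpa using this
    have hval0 : ∀ j, val w j = 0 := by
      intro j
      have h := hMf_basis w j
      rw [hM0] at h
      simp only [LinearMap.zero_apply] at h
      rcases smul_eq_zero.mp h.symm with h' | h'
      · exact absurd h' (ne_of_gt (hcoef_pos j))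
      · exact h'
    have hg : w.1 = 0 := by
      funext i
      have h := hval0 (c (Sum.inl i, 0))
      simp only [hvaldef, Equiv.symm_apply_apply, Sum.elim_inl] at h
      rcases smul_eq_zero.mp h with h' | h'
      · exact h'
      · exact absurd h' hv₀
    have hv : w.2 = 0 := by
      have h := hval0 (c (Sum.inr i₀, 0))
      simpa [hvaldef, Equiv.symm_apply_apply] using h
    rw [Prod.ext_iff]
    exact ⟨hg, hv⟩
  have hJ_inj : Function.Injective J := by
    intro w w' h
    rw [← sub_eq_zero]
    exact hkey _ (by rw [map_sub, h, sub_self])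
  refine ⟨LinearMap.range J, ?_, ?_⟩
  · have e1 : Module.rank ℝ ↥(LinearMap.range J) = Module.rank ℝ ((ιs → ℝ) × F) :=
      ((LinearEquiv.ofInjective J hJ_inj).rank_eq).symm
    haveI : Module.Free ℝ (ιs → ℝ) := Module.Free.of_divisionRing ℝ _
    haveI : Module.Free ℝ F := Module.Free.of_divisionRing ℝ F
    rw [e1, rank_prod]
    have e2 : Module.rank ℝ (ιs → ℝ) = 2 ^ Module.rank ℝ E := by
      rw [rank_fun_infinite, Cardinal.mk_arrow, Cardinal.mk_real, Cardinal.lift_continuum,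
        Cardinal.lift_uzero, ← Cardinal.two_power_aleph0, ← Cardinal.power_mul,
        Cardinal.aleph0_mul_eq (by rw [hmkι]; exact hrk), hmkι]
    rw [e2]
    refine Cardinal.add_eq_max ?_
    rw [Cardinal.aleph0_le_lift]
    exact hrk.trans (Cardinal.cantor _).le
  · intro T hT hT0 hcont
    obtain ⟨w, rfl⟩ := hT
    have hMw : Mf w ≠ 0 := by
      intro h0
      apply hT0
      ext x
      rw [hJ_apply, hΦ_apply, h0]
      simp
    have hcont' : Continuous ⇑(Mf w) := by
      have he : ⇑(Mf w) = ⇑(J w) ∘ ins := by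
        funext z
        rw [Function.comp_apply, hJ_apply, hins_eval]
      rw [he]
      exact hcont.comp hins_cont
    have hexj : ∃ j, val w j ≠ 0 := by
      by_contra h
      push_neg at h
      apply hMw
      apply b.ext
      intro j
      rw [hMf_basis, h j, smul_zero, LinearMap.zero_apply]
    obtain ⟨j, hu⟩ := hexj
    have hunorm : 0 < ‖val w j‖ := norm_pos_iff.mpr hu
    obtain ⟨C, hC0, hbound⟩ := SemilinearMapClass.bound_of_continuous (Mf w) hcont'
    obtain ⟨n, hn⟩ := exists_nat_gt (C / ‖val w j‖)
    set jn : ιs := c ((c.symm j).1, n) with hjndef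
    have hvjn : val w jn = val w j := by
      rw [hjndef]
      simp only [hvaldef, Equiv.symm_apply_apply]
    have hcoefjn : coef jn = ((n : ℝ) + 1) * ‖(b jn : E)‖ := by
      conv_lhs => rw [hjndef]
      simp only [hcoefdef, Equiv.symm_apply_apply]
      rfl
    have hbn : 0 < ‖(b jn : E)‖ := norm_pos_iff.mpr (hbne jn)
    have h1 : ‖Mf w (b jn)‖ = (((n : ℝ) + 1) * ‖(b jn : E)‖) * ‖val w j‖ := by
      rw [hMf_basis, hvjn, norm_smul, Real.norm_eq_abs, abs_of_pos (hcoef_pos jn), hcoefjn]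
    have h2 := hbound (b jn)
    rw [h1] at h2
    have h3 : ((n : ℝ) + 1) * ‖val w j‖ ≤ C := by
      have h2' : (((n : ℝ) + 1) * ‖val w j‖) * ‖(b jn : E)‖ ≤ C * ‖(b jn : E)‖ := by
        calc (((n : ℝ) + 1) * ‖val w j‖) * ‖(b jn : E)‖
            = (((n : ℝ) + 1) * ‖(b jn : E)‖) * ‖val w j‖ := by ring
          _ ≤ C * ‖(b jn : E)‖ := h2
      exact le_of_mul_le_mul_right h2' hbn
    have h4 : C < (n : ℝ) * ‖val w j‖ := (div_lt_iff₀ hunorm).mp hn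
    have h5 : ((n : ℝ) + 1) * ‖val w j‖ = (n : ℝ) * ‖val w j‖ + ‖val w j‖ := by ring
    linarith
end

section
/- Let E and F be infinite-dimensional Banach spaces over ℝ with dim F ≤ 2^{dim E}, and let m be a positive integer. Then the set NL(^m E; F) is maximal lineable in L(^m E; F); that is, NL(^m E; F) ∪ {0} contains a linear subspace of L(^m E; F) whose dimension equals dim L(^m E; F). -/
universe u v

open Cardinal

/-- The rank of `ι → ℝ` for infinite `ι` is `2 ^ #ι` (Erdős–Kaplansky). -/
lemma st5_rank_fun_real {ι : Type u} [Infinite ι] :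
    Module.rank ℝ (ι → ℝ) = 2 ^ (#ι) := by
  rw [rank_fun_infinite, mk_arrow, lift_uzero, mk_real, lift_continuum, ← two_power_aleph0,
    ← power_mul, aleph0_mul_eq (aleph0_le_mk ι)]

/-- If `E`, `F` are infinite-dimensional real Banach spaces with
`dim F ≤ 2 ^ dim E` and `m` is a positive integer, then `NL(^m E; F)` is maximal lineable in
`L(^m E; F)`: there is a subspace of `L(^m E; F)` contained in `NL(^m E; F) ∪ {0}` whose
dimension equals `dim L(^m E; F)`. -/
theorem statement5 (E : Type u) (F : Type v) [NormedAddCommGroup E] [NormedSpace ℝ E]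
    [CompleteSpace E] [NormedAddCommGroup F] [NormedSpace ℝ F] [CompleteSpace F]
    (hE : ¬FiniteDimensional ℝ E) (hF : ¬FiniteDimensional ℝ F)
    (hEF : Cardinal.lift.{u} (Module.rank ℝ F) ≤ Cardinal.lift.{v} (2 ^ Module.rank ℝ E))
    (m : ℕ) (hm : 0 < m) :
    ∃ S : Submodule ℝ (MultilinearMap ℝ (fun _ : Fin m => E) F),
      Module.rank ℝ ↥S = Module.rank ℝ (MultilinearMap ℝ (fun _ : Fin m => E) F) ∧
      ∀ T ∈ S, T ≠ 0 → ¬Continuous ⇑T := by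
  classical
  obtain ⟨m', rfl⟩ : ∃ m', m = m' + 1 := ⟨m - 1, (Nat.succ_pred_eq_of_pos hm).symm⟩
  -- basic facts
  have hErank : ℵ₀ ≤ Module.rank ℝ E := by
    by_contra h
    exact hE (Module.rank_lt_aleph0_iff.mp (not_le.mp h))
  have hFrank : ℵ₀ ≤ Module.rank ℝ F := by
    by_contra h
    exact hF (Module.rank_lt_aleph0_iff.mp (not_le.mp h))
  have hEnt : Nontrivial E := by
    rcases subsingleton_or_nontrivial E with hs | h
    · rw [rank_subsingleton'] at hErank
      exact absurd (le_zero_iff.mp hErank) aleph0_ne_zero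
    · exact h
  have hFnt : Nontrivial F := by
    rcases subsingleton_or_nontrivial F with hs | h
    · rw [rank_subsingleton'] at hFrank
      exact absurd (le_zero_iff.mp hFrank) aleph0_ne_zero
    · exact h
  -- a basis of E
  obtain ⟨⟨ι, B⟩⟩ := Module.Free.exists_basis (R := ℝ) (M := E)
  have hι : ℵ₀ ≤ #ι := by rw [B.mk_eq_rank'']; exact hErank
  haveI : Infinite ι := aleph0_le_mk_iff.mp hι
  -- a pairing `ι ≃ ι × ℕ`
  have hcard : #(ι × ℕ) = #ι := by
    rw [mk_prod, lift_uzero, mk_nat, lift_aleph0, mul_aleph0_eq hι]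
  obtain ⟨e⟩ : Nonempty (ι ≃ ι × ℕ) := (Cardinal.eq.mp hcard).elim (fun q => ⟨q.symm⟩)
  -- scaling coefficients
  set c : ι → ℝ := fun i => (((e i).2 : ℝ) + 1) * ‖B i‖ with hc_def
  have hc : ∀ i, 0 < c i := fun i => by
    have h1 : (0:ℝ) < ((e i).2 : ℝ) + 1 := by positivity
    have h2 : (0:ℝ) < ‖B i‖ := norm_pos_iff.mpr (B.ne_zero i)
    exact mul_pos h1 h2
  -- the family of (mostly discontinuous) linear functionals
  let M₀ : (ι → ℝ) →ₗ[ℝ] (ι → ℝ) :=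
    { toFun := fun t i => c i * t (e i).1
      map_add' := by intro t s; funext i; simp [mul_add]
      map_smul' := by intro r t; funext i; simp [smul_eq_mul]; ring }
  let Φ : (ι → ℝ) →ₗ[ℝ] (E →ₗ[ℝ] ℝ) := (B.constr ℝ).toLinearMap ∘ₗ M₀
  have hΦB : ∀ (t : ι → ℝ) (i : ι), Φ t (B i) = c i * t (e i).1 := by
    intro t i
    simp [Φ, M₀, Module.Basis.constr_basis]
  have hΦ0 : ∀ t : ι → ℝ, Φ t = 0 → t = 0 := by
    intro t ht
    funext γ
    have h1 := hΦB t (e.symm (γ, 0))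
    rw [ht] at h1
    simp only [LinearMap.zero_apply, Equiv.apply_symm_apply] at h1
    have := (hc (e.symm (γ, 0))).ne'
    have h2 : c (e.symm (γ, 0)) * t γ = 0 := h1.symm
    simpa [this] using (mul_eq_zero.mp h2).resolve_left this
  -- fixed data
  obtain ⟨y₀, hy₀⟩ : ∃ y : F, y ≠ 0 := exists_ne 0
  obtain ⟨w, hw⟩ : ∃ x : E, x ≠ 0 := exists_ne 0
  obtain ⟨g, hg1, hgw⟩ := exists_dual_vector ℝ w (norm_ne_zero_iff.mpr hw)
  have hgw0 : g w ≠ 0 := by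
    rw [hgw]
    simpa using (norm_pos_iff.mpr hw).ne'
  -- the multilinear scaffold
  have keyval : ∀ (f : E →ₗ[ℝ] ℝ) (x : Fin (m' + 1) → E),
      ((MultilinearMap.mkPiRing ℝ (Fin (m' + 1)) y₀).compLinearMap
        (Fin.cons f (fun _ => g.toLinearMap))) x
      = (f (x 0) * ∏ i : Fin m', g (x i.succ)) • y₀ := by
    intro f x
    simp [MultilinearMap.compLinearMap_apply, MultilinearMap.mkPiRing_apply,
      Fin.prod_univ_succ]
  let Ψ : (ι → ℝ) →ₗ[ℝ] MultilinearMap ℝ (fun _ : Fin (m' + 1) => E) F :=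
    { toFun := fun t => (MultilinearMap.mkPiRing ℝ (Fin (m' + 1)) y₀).compLinearMap
        (Fin.cons (Φ t) (fun _ => g.toLinearMap))
      map_add' := by
        intro t s
        ext x
        simp only [keyval, MultilinearMap.add_apply, map_add, LinearMap.add_apply]
        rw [add_mul, add_smul]
      map_smul' := by
        intro r t
        ext x
        simp only [keyval, RingHom.id_apply, MultilinearMap.smul_apply, map_smul,
          LinearMap.smul_apply, smul_eq_mul]
        rw [mul_assoc, smul_smul] }
  have hΨval : ∀ (t : ι → ℝ) (x : Fin (m' + 1) → E),
      Ψ t x = (Φ t (x 0) * ∏ i : Fin m', g (x i.succ)) • y₀ := fun t x => keyval (Φ t) x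
  have hΨ0 : ∀ t : ι → ℝ, Ψ t = 0 → t = 0 := by
    intro t ht
    apply hΦ0
    ext v
    have h1 := hΨval t (Fin.cons v (fun _ => w))
    rw [ht] at h1
    simp only [MultilinearMap.zero_apply, Fin.cons_zero, Fin.cons_succ] at h1
    have h2 : Φ t v * ∏ _i : Fin m', g w = 0 := by
      rcases smul_eq_zero.mp h1.symm with h | h
      · exact h
      · exact absurd h hy₀
    rw [Finset.prod_const, mul_eq_zero] at h2
    rcases h2 with h | h
    · simpa using h
    · exact absurd h (pow_ne_zero _ hgw0)
  have hΨinj : Function.Injective Ψ := by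
    intro t s h
    have := hΨ0 (t - s) (by rw [map_sub, h, sub_self])
    exact sub_eq_zero.mp this
  refine ⟨LinearMap.range Ψ, ?_, ?_⟩
  · -- rank computation
    have hκ : #ι = Module.rank ℝ E := B.mk_eq_rank''
    have hrange : Module.rank ℝ ↥(LinearMap.range Ψ) =
        Cardinal.lift.{v} (2 ^ Module.rank ℝ E) := by
      have h1 := lift_rank_range_of_injective Ψ hΨinj
      rw [st5_rank_fun_real (ι := ι), hκ] at h1
      have h2 : Cardinal.lift.{u} (Module.rank ℝ ↥(LinearMap.range Ψ)) =
          Cardinal.lift.{u} (Cardinal.lift.{v} (2 ^ Module.rank ℝ E)) := by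
        rw [h1, lift_lift]
      exact lift_inj.mp h2
    have hlift2 : Cardinal.lift.{v} (2 ^ Module.rank ℝ E)
        = 2 ^ Cardinal.lift.{v} (Module.rank ℝ E) := by
      rw [lift_power, lift_two]
    have hK : ℵ₀ ≤ Cardinal.lift.{v} (Module.rank ℝ E) := aleph0_le_lift.mpr hErank
    have hupper : Module.rank ℝ (MultilinearMap ℝ (fun _ : Fin (m' + 1) => E) F)
        ≤ Cardinal.lift.{v} (2 ^ Module.rank ℝ E) := by
      let j : MultilinearMap ℝ (fun _ : Fin (m' + 1) => E) F →ₗ[ℝ] ((Fin (m' + 1) → ι) → F) :=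
        { toFun := fun T v => T (fun k => B (v k))
          map_add' := fun T T' => rfl
          map_smul' := fun r T => rfl }
      have hjinj : Function.Injective j := by
        intro T T' h
        exact Module.Basis.ext_multilinear (fun _ => B) fun v => congrFun h v
      have h1 := LinearMap.lift_rank_le_of_injective j hjinj
      rw [Cardinal.lift_le] at h1
      refine h1.trans ((rank_le_card _ _).trans ?_)
      rw [mk_arrow]
      have hdom : #(Fin (m' + 1) → ι) = #ι := by
        rw [mk_arrow, lift_uzero, mk_fin, lift_natCast, power_natCast,
          power_nat_eq hι (Nat.succ_le_succ (Nat.zero_le m'))]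
      rw [hdom, hκ]
      obtain ⟨⟨ιF, BF⟩⟩ := Module.Free.exists_basis (R := ℝ) (M := F)
      have hιF : ℵ₀ ≤ #ιF := by rw [BF.mk_eq_rank'']; exact hFrank
      haveI : Infinite ιF := aleph0_le_mk_iff.mp hιF
      have hmkF : #F = max #ιF 𝔠 := by
        rw [BF.repr.toEquiv.cardinal_eq, mk_finsupp_lift_of_infinite, lift_uzero, mk_real,
          lift_continuum]
      have hFle : Cardinal.lift.{u} #F ≤ 2 ^ Cardinal.lift.{v} (Module.rank ℝ E) := by
        rw [hmkF, lift_max, lift_continuum, ← hlift2]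
        refine max_le ?_ ?_
        · rw [BF.mk_eq_rank'']; exact hEF
        · rw [hlift2, ← two_power_aleph0]
          exact power_le_power_left two_ne_zero hK
      calc Cardinal.lift.{u} #F ^ Cardinal.lift.{v} (Module.rank ℝ E)
          ≤ (2 ^ Cardinal.lift.{v} (Module.rank ℝ E)) ^ Cardinal.lift.{v} (Module.rank ℝ E) :=
            power_le_power_right hFle
        _ = 2 ^ (Cardinal.lift.{v} (Module.rank ℝ E) * Cardinal.lift.{v} (Module.rank ℝ E)) :=
            power_mul.symm
        _ = 2 ^ Cardinal.lift.{v} (Module.rank ℝ E) := by rw [mul_eq_self hK]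
        _ = Cardinal.lift.{v} (2 ^ Module.rank ℝ E) := hlift2.symm
    exact le_antisymm (Submodule.rank_le _) (hupper.trans_eq hrange.symm)
  · -- discontinuity
    rintro T ⟨t, rfl⟩ hT0 hcont
    have ht0 : t ≠ 0 := fun h => hT0 (by rw [h, map_zero])
    obtain ⟨γ, hγ⟩ := Function.ne_iff.mp ht0
    simp only [Pi.zero_apply] at hγ
    obtain ⟨C, hC0, hC⟩ := (Ψ t).exists_bound_of_continuous hcont
    set a : ℝ := |t γ| * |g w| ^ m' * ‖y₀‖ with ha_def
    have ha : 0 < a := by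
      have := abs_pos.mpr hγ
      have := abs_pos.mpr hgw0
      have := norm_pos_iff.mpr hy₀
      positivity
    set b : ℝ := C * ‖w‖ ^ m' with hb_def
    have key : ∀ n : ℕ, ((n : ℝ) + 1) * a ≤ b := by
      intro n
      set i : ι := e.symm (γ, n) with hi_def
      set x : Fin (m' + 1) → E := Fin.cons (B i) (fun _ => w) with hx_def
      have hBi : (0:ℝ) < ‖B i‖ := norm_pos_iff.mpr (B.ne_zero i)
      have h1 := hC x
      have hval : Ψ t x = ((((n : ℝ) + 1) * ‖B i‖ * t γ) * (g w) ^ m') • y₀ := by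
        rw [hΨval]
        simp only [hx_def, Fin.cons_zero, Fin.cons_succ, Finset.prod_const,
          Finset.card_univ, Fintype.card_fin]
        rw [hΦB]
        simp [hi_def, hc_def]
      have hnorm : ‖Ψ t x‖ = ((n : ℝ) + 1) * ‖B i‖ * a := by
        rw [hval, norm_smul]
        simp only [Real.norm_eq_abs, abs_mul, abs_pow, ha_def]
        rw [abs_of_pos (by positivity : (0:ℝ) < ((n : ℝ) + 1)), abs_of_pos hBi]
        ring
      have hprod : ∏ j, ‖x j‖ = ‖B i‖ * ‖w‖ ^ m' := by
        rw [Fin.prod_univ_succ]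
        simp [hx_def]
      rw [hnorm, hprod] at h1
      have h2 : ((n : ℝ) + 1) * a * ‖B i‖ ≤ b * ‖B i‖ := by
        calc ((n : ℝ) + 1) * a * ‖B i‖ = ((n : ℝ) + 1) * ‖B i‖ * a := by ring
        _ ≤ C * (‖B i‖ * ‖w‖ ^ m') := h1
        _ = b * ‖B i‖ := by rw [hb_def]; ring
      exact le_of_mul_le_mul_right h2 hBi
    obtain ⟨n, hn⟩ := exists_nat_gt (b / a)
    have hb : b < (n : ℝ) * a := by rwa [div_lt_iff₀ ha] at hn
    have := key n
    nlinarith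
end

section
/- Let E be an infinite-dimensional normed space over ℝ, F a normed space over ℝ, and n a positive integer. Let T_1, …, T_n ∈ NL(E; F) be linearly independent non-continuous linear operators such that span(T_1, …, T_n) ⊆ NL(E; F) ∪ {0}. If the intersection K = ⋂_{i=1}^n Ker T_i is nontrivial and infinite-dimensional, with dim K = γ, then there exists a linear subspace S of L(E; F) such that span(T_1, …, T_n) ⊆ S ⊆ NL(E; F) ∪ {0} and dim S ≥ max{2^γ, dim F}. -/
universe u v

set_option synthInstance.maxHeartbeats 1000000
set_option maxHeartbeats 1000000

open Cardinal

/-- Core construction: given a submodule `K` of infinite rank, there is a submodule `W` of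
`L(E;F)` all of whose nonzero elements are unbounded on `K`, with rank at least
`max (2 ^ rank K) (rank F)`. -/
theorem statement7_aux (E : Type u) (F : Type v) [NormedAddCommGroup E] [NormedSpace ℝ E]
    [NormedAddCommGroup F] [NormedSpace ℝ F] (K : Submodule ℝ E)
    (hK : ℵ₀ ≤ Module.rank ℝ K) (y₀ : F) (hy₀ : y₀ ≠ 0) :
    ∃ W : Submodule ℝ (E →ₗ[ℝ] F),
      (∀ U ∈ W, U ≠ 0 → ∀ M : ℝ, ∃ x ∈ K, 0 < ‖x‖ ∧ M * ‖x‖ < ‖U x‖) ∧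
      Cardinal.lift.{v} (2 ^ Module.rank ℝ ↥K) ≤ Module.rank ℝ ↥W ∧
      Cardinal.lift.{u} (Module.rank ℝ F) ≤ Module.rank ℝ ↥W := by
  classical
  -- a basis of K
  obtain ⟨⟨ι, B0⟩⟩ := Module.Free.exists_basis (R := ℝ) (M := K)
  have hι : ℵ₀ ≤ #ι := by rwa [B0.mk_eq_rank'']
  haveI : Infinite ι := Cardinal.aleph0_le_mk_iff.mp hι
  -- reindex by ι × ℕ
  have hcard : #(ι × ℕ) = #ι := by
    rw [Cardinal.mk_prod, Cardinal.mk_nat, Cardinal.lift_aleph0, Cardinal.lift_uzero,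
      Cardinal.mul_aleph0_eq hι]
  obtain ⟨e⟩ := Cardinal.eq.mp hcard
  let b : Module.Basis (ι × ℕ) ℝ K := B0.reindex e.symm
  -- projection onto K
  obtain ⟨C, hC⟩ := Submodule.exists_isCompl K
  let π : E →ₗ[ℝ] K := Submodule.linearProjOfIsCompl K C hC
  have hπ : ∀ x : K, π (x : E) = x := fun x => Submodule.linearProjOfIsCompl_apply_left hC x
  -- the coefficients
  let c : ι × ℕ → ℝ := fun p => (p.2 : ℝ) * ‖(b p : E)‖
  have hbne : ∀ p : ι × ℕ, (0 : ℝ) < ‖(b p : E)‖ := by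
    intro p
    rw [norm_pos_iff]
    simpa [Submodule.coe_eq_zero] using b.ne_zero p
  -- the embedding Φ
  let Φ : (ι → F) →ₗ[ℝ] (E →ₗ[ℝ] F) :=
    (LinearMap.lcomp ℝ F π).comp
      (((b.constr ℝ : (ι × ℕ → F) ≃ₗ[ℝ] (↥K →ₗ[ℝ] F)) :
          (ι × ℕ → F) →ₗ[ℝ] (↥K →ₗ[ℝ] F)).comp
        (LinearMap.pi fun p : ι × ℕ => c p • (LinearMap.proj p.1 : (ι → F) →ₗ[ℝ] F)))
  have hΦeq : ∀ (h : ι → F) (x : E),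
      Φ h x = b.constr ℝ (fun p => c p • h p.1) (π x) := by
    intro h x
    have hpi : ((LinearMap.pi fun p : ι × ℕ => c p • (LinearMap.proj p.1 : (ι → F) →ₗ[ℝ] F)) h)
        = fun p => c p • h p.1 := by
      funext p
      simp [LinearMap.pi_apply]
    simp [Φ, LinearMap.lcomp_apply, hpi]
  have hΦapply : ∀ (h : ι → F) (p : ι × ℕ), Φ h ((b p : K) : E) = c p • h p.1 := by
    intro h p
    rw [hΦeq, hπ, Module.Basis.constr_basis]
  have hΦinj : Function.Injective Φ := by
    rw [injective_iff_map_eq_zero]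
    intro h hh
    funext α
    have := hΦapply h (α, 1)
    rw [hh] at this
    have h1 : c (α, 1) ≠ 0 := by
      have := hbne (α, 1)
      simp only [c, Nat.cast_one, one_mul]
      positivity
    have : c (α, 1) • h α = 0 := by simpa using this.symm
    rcases smul_eq_zero.mp this with h' | h'
    · exact absurd h' h1
    · exact h'
  refine ⟨LinearMap.range Φ, ?_, ?_, ?_⟩
  · -- unboundedness on K
    rintro U ⟨h, rfl⟩ hU M
    have hh : h ≠ 0 := fun h0 => hU (by rw [h0, map_zero])
    obtain ⟨α, hα⟩ := Function.ne_iff.mp hh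
    have hα' : h α ≠ 0 := by simpa using hα
    have hnα : (0 : ℝ) < ‖h α‖ := norm_pos_iff.mpr hα'
    obtain ⟨m, hm⟩ := exists_nat_gt (M / ‖h α‖)
    refine ⟨((b (α, m) : K) : E), (b (α, m)).2, hbne _, ?_⟩
    rw [hΦapply h (α, m)]
    have hM : M < (m : ℝ) * ‖h α‖ := by
      rwa [div_lt_iff₀ hnα] at hm
    have hc : c (α, m) = (m : ℝ) * ‖(b (α, m) : E)‖ := rfl
    rw [norm_smul, hc, Real.norm_eq_abs]
    have habs : |(m : ℝ) * ‖(b (α, m) : E)‖| = (m : ℝ) * ‖(b (α, m) : E)‖ := by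
      apply abs_of_nonneg; positivity
    rw [habs]
    have := hbne (α, m)
    nlinarith
  · -- rank ≥ 2 ^ rank K
    have hrankW : Module.rank ℝ (ι → F) = Module.rank ℝ ↥(LinearMap.range Φ) :=
      (LinearEquiv.ofInjective Φ hΦinj).rank_eq
    -- inject (ι → ℝ) into (ι → F)
    let j : (ι → ℝ) →ₗ[ℝ] (ι → F) :=
      LinearMap.pi fun a => (LinearMap.toSpanSingleton ℝ F y₀).comp (LinearMap.proj a)
    have hj : Function.Injective j := by
      intro g g' hgg'
      funext a
      have : g a • y₀ = g' a • y₀ := congrFun hgg' a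
      exact smul_left_injective ℝ hy₀ this
    have h1 := LinearMap.lift_rank_le_of_injective j hj
    have h2 : Module.rank ℝ (ι → ℝ) = 2 ^ #ι := by
      rw [rank_fun_infinite, Cardinal.mk_arrow, Cardinal.mk_real, Cardinal.lift_continuum,
        Cardinal.lift_uzero, ← Cardinal.two_power_aleph0, ← Cardinal.power_mul,
        Cardinal.aleph0_mul_eq hι]
    rw [← hrankW, ← B0.mk_eq_rank'', ← h2]
    rw [Cardinal.lift_umax.{u, v}, Cardinal.lift_id'.{u, v} (Module.rank ℝ (ι → F))] at h1
    exact h1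
  · -- rank ≥ rank F
    have hrankW : Module.rank ℝ (ι → F) = Module.rank ℝ ↥(LinearMap.range Φ) :=
      (LinearEquiv.ofInjective Φ hΦinj).rank_eq
    haveI : Nonempty ι := inferInstance
    obtain ⟨a₀⟩ := (inferInstance : Nonempty ι)
    let j : F →ₗ[ℝ] (ι → F) := LinearMap.pi fun _ => LinearMap.id
    have hj : Function.Injective j := fun y y' hyy' => congrFun hyy' a₀
    have h1 := LinearMap.lift_rank_le_of_injective j hj
    rw [← hrankW]
    rw [Cardinal.lift_umax.{v, u}, Cardinal.lift_id'.{v, u} (Module.rank ℝ (ι → F))] at h1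
    exact h1

/-- Let `E` be an infinite-dimensional real normed space, `F` a real normed space
and `n` a positive integer. Let `T₁, …, Tₙ` be linearly independent non-continuous linear
operators from `E` to `F` whose span is contained in `NL(E; F) ∪ {0}`. If
`K = ⋂ i, ker Tᵢ` is nontrivial and infinite-dimensional, with `dim K = γ`, then there is a
subspace `S` of `L(E; F)` with `span(T₁, …, Tₙ) ⊆ S ⊆ NL(E; F) ∪ {0}` and
`dim S ≥ max {2 ^ γ, dim F}` (with universe lifts to compare cardinals). -/
theorem statement7 (E : Type u) (F : Type v) [NormedAddCommGroup E] [NormedSpace ℝ E]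
    [NormedAddCommGroup F] [NormedSpace ℝ F]
    (hE : ¬FiniteDimensional ℝ E) (n : ℕ) (hn : 0 < n)
    (T : Fin n → (E →ₗ[ℝ] F)) (hTind : LinearIndependent ℝ T)
    (hTnc : ∀ R ∈ Submodule.span ℝ (Set.range T), R ≠ 0 → ¬Continuous ⇑R)
    (hKne : (⨅ i, LinearMap.ker (T i)) ≠ ⊥)
    (hKinf : ¬FiniteDimensional ℝ ↥(⨅ i, LinearMap.ker (T i))) :
    ∃ S : Submodule ℝ (E →ₗ[ℝ] F),
      Submodule.span ℝ (Set.range T) ≤ S ∧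
      (∀ R ∈ S, R ≠ 0 → ¬Continuous ⇑R) ∧
      max (Cardinal.lift.{v} (2 ^ Module.rank ℝ ↥(⨅ i, LinearMap.ker (T i))))
          (Cardinal.lift.{u} (Module.rank ℝ F)) ≤ Module.rank ℝ ↥S := by
  classical
  set K : Submodule ℝ E := ⨅ i, LinearMap.ker (T i) with hKdef
  -- K has infinite rank
  have hK : ℵ₀ ≤ Module.rank ℝ K := by
    by_contra hlt
    push_neg at hlt
    exact hKinf (Module.rank_lt_aleph0_iff.mp hlt)
  -- F is nontrivial
  have hFnt : ∃ y₀ : F, y₀ ≠ 0 := by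
    by_contra hc
    push_neg at hc
    refine hTind.ne_zero ⟨0, hn⟩ ?_
    ext x
    exact hc _
  obtain ⟨y₀, hy₀⟩ := hFnt
  obtain ⟨W, hWub, hW2, hWF⟩ := statement7_aux E F K hK y₀ hy₀
  -- members of the span of T vanish on K
  have hvanish : ∀ R₁ ∈ Submodule.span ℝ (Set.range T), ∀ x ∈ K, R₁ x = 0 := by
    have hsub : Submodule.span ℝ (Set.range T) ≤
        { carrier := {R : E →ₗ[ℝ] F | ∀ x ∈ K, R x = 0}
          add_mem' := by intro a b ha hb x hx; simp [ha x hx, hb x hx]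
          zero_mem' := by intro x _; simp
          smul_mem' := by intro t a ha x hx; simp [ha x hx] } := by
      rw [Submodule.span_le]
      rintro R ⟨i, rfl⟩ x hx
      have : x ∈ LinearMap.ker (T i) := by
        rw [hKdef] at hx
        exact (Submodule.mem_iInf _).mp hx i
      exact this
    intro R₁ hR₁
    exact hsub hR₁
  refine ⟨Submodule.span ℝ (Set.range T) ⊔ W, le_sup_left, ?_, ?_⟩
  · -- all nonzero members are discontinuous
    intro R hR hR0 hcont
    obtain ⟨R₁, hR₁, U, hU, rfl⟩ := Submodule.mem_sup.mp hR
    by_cases hU0 : U = 0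
    · subst hU0
      rw [add_zero] at hR0 hcont
      exact hTnc R₁ hR₁ hR0 hcont
    · obtain ⟨M, hM0, hMb⟩ := SemilinearMapClass.bound_of_continuous (R₁ + U) hcont
      obtain ⟨x, hxK, hxn, hxub⟩ := hWub U hU hU0 M
      have hRx : (R₁ + U) x = U x := by
        rw [LinearMap.add_apply, hvanish R₁ hR₁ x hxK, zero_add]
      have := hMb x
      rw [hRx] at this
      exact absurd this (not_le.mpr hxub)
  · -- rank bound
    have hWle : Module.rank ℝ ↥W ≤ Module.rank ℝ ↥(Submodule.span ℝ (Set.range T) ⊔ W) :=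
      Submodule.rank_mono le_sup_right
    exact max_le (hW2.trans hWle) (hWF.trans hWle)
end

section
/- Let E be an infinite-dimensional normed space over ℝ and let F be a nonzero normed space over ℝ with dim E > dim F, and let m be a positive integer. Then the set NL(^m E; F) is (1, 2^{dim E})-lineable in L(^m E; F): every non-continuous m-linear operator T : E×⋯×E → F is contained in a linear subspace S of L(^m E; F) with dim S = 2^{dim E} and S ⊆ NL(^m E; F) ∪ {0}. -/
universe u v

namespace St8

variable {E : Type u} {F : Type v} [NormedAddCommGroup E] [NormedSpace ℝ E]
  [NormedAddCommGroup F] [NormedSpace ℝ F]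

/-- The linear map sending a linear functional `ψ` on `E` to the `(k+1)`-linear map
`x ↦ (ψ (x 0) * ∏ i, φ (x i.succ)) • v`. -/
noncomputable def Phi (k : ℕ) (φ : E →ₗ[ℝ] ℝ) (v : F) :
    (E →ₗ[ℝ] ℝ) →ₗ[ℝ] MultilinearMap ℝ (fun _ : Fin (k + 1) => E) F where
  toFun ψ := (MultilinearMap.mkPiRing ℝ (Fin (k + 1)) v).compLinearMap
      (Fin.cons ψ (fun _ => φ))
  map_add' ψ₁ ψ₂ := by
    ext x
    simp [MultilinearMap.compLinearMap_apply, MultilinearMap.mkPiRing_apply,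
      Fin.prod_univ_succ, add_mul, add_smul]
  map_smul' c ψ := by
    ext x
    simp [MultilinearMap.compLinearMap_apply, MultilinearMap.mkPiRing_apply,
      Fin.prod_univ_succ, smul_smul, mul_assoc]

theorem Phi_apply (k : ℕ) (φ : E →ₗ[ℝ] ℝ) (v : F) (ψ : E →ₗ[ℝ] ℝ) (x : Fin (k + 1) → E) :
    Phi k φ v ψ x = (ψ (x 0) * ∏ i : Fin k, φ (x i.succ)) • v := by
  simp [Phi, MultilinearMap.compLinearMap_apply, MultilinearMap.mkPiRing_apply,
    Fin.prod_univ_succ]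

/-- The linear map sending `h : α → ℝ` to the linear functional
`x ↦ ∑ i, (B.repr x i) * (w i * h (p i))`. -/
noncomputable def Psi {ι : Type u} {α : Type u} (B : Module.Basis ι ℝ E) (w : ι → ℝ) (p : ι → α) :
    (α → ℝ) →ₗ[ℝ] (E →ₗ[ℝ] ℝ) where
  toFun h := (Finsupp.linearCombination ℝ (fun i => w i * h (p i))) ∘ₗ
      (B.repr : E →ₗ[ℝ] (ι →₀ ℝ))
  map_add' h₁ h₂ := by
    refine LinearMap.ext fun x => ?_
    simp only [LinearMap.comp_apply, LinearMap.add_apply, Finsupp.linearCombination_apply,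
      Finsupp.sum, Pi.add_apply]
    rw [← Finset.sum_add_distrib]
    refine Finset.sum_congr rfl fun i _ => ?_
    simp [mul_add, smul_eq_mul]
  map_smul' c h := by
    refine LinearMap.ext fun x => ?_
    simp only [LinearMap.comp_apply, LinearMap.smul_apply, Finsupp.linearCombination_apply,
      Finsupp.sum, Pi.smul_apply, RingHom.id_apply, smul_eq_mul, Finset.mul_sum]
    refine Finset.sum_congr rfl fun i _ => ?_
    ring

theorem Psi_apply_basis {ι : Type u} {α : Type u} (B : Module.Basis ι ℝ E) (w : ι → ℝ) (p : ι → α)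
    (h : α → ℝ) (j : ι) : Psi B w p h (B j) = w j * h (p j) := by
  simp [Psi, Module.Basis.repr_self, Finsupp.linearCombination_single]

theorem continuous_fin_cons {G : Type*} [TopologicalSpace G] (k : ℕ) (c : G) :
    Continuous fun x : G => (Fin.cons x (fun _ => c) : Fin (k + 1) → G) := by
  apply continuous_pi
  intro i
  refine Fin.cases ?_ ?_ i
  · simpa using continuous_id'
  · intro j; simpa using continuous_const

end St8

open Cardinal in
/-- Let `E` be an infinite-dimensional real normed space and `F` a nonzero real
normed space with `dim E > dim F`, and let `m` be a positive integer. Then `NL(^m E; F)` is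
`(1, 2 ^ dim E)`-lineable in `L(^m E; F)`: every non-continuous `m`-linear operator
`T : E × ⋯ × E → F` lies in a subspace `S` of `L(^m E; F)` with `dim S = 2 ^ dim E` and
`S ⊆ NL(^m E; F) ∪ {0}`. -/
theorem statement8 (E : Type u) (F : Type v) [NormedAddCommGroup E] [NormedSpace ℝ E]
    [NormedAddCommGroup F] [NormedSpace ℝ F] [Nontrivial F]
    (hE : ¬FiniteDimensional ℝ E)
    (hEF : Cardinal.lift.{u} (Module.rank ℝ F) < Cardinal.lift.{v} (Module.rank ℝ E))
    (m : ℕ) (hm : 0 < m)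
    (T : MultilinearMap ℝ (fun _ : Fin m => E) F) (hT : ¬Continuous ⇑T) :
    ∃ S : Submodule ℝ (MultilinearMap ℝ (fun _ : Fin m => E) F),
      T ∈ S ∧ Module.rank ℝ ↥S = Cardinal.lift.{v} (2 ^ Module.rank ℝ E) ∧
      ∀ R ∈ S, R ≠ 0 → ¬Continuous ⇑R := by
  classical
  obtain ⟨k, rfl⟩ : ∃ k, m = k + 1 := ⟨m - 1, (Nat.succ_pred_eq_of_pos hm).symm⟩
  have hℵ : ℵ₀ ≤ Module.rank ℝ E := by
    by_contra hlt
    exact hE (Module.rank_lt_aleph0_iff.mp (not_le.mp hlt))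
  -- a Hamel basis of E
  let ι := Module.Basis.ofVectorSpaceIndex ℝ E
  let B : Module.Basis ι ℝ E := Module.Basis.ofVectorSpace ℝ E
  have hκ : #ι = Module.rank ℝ E := B.mk_eq_rank''
  have hℵι : ℵ₀ ≤ #ι := by rw [hκ]; exact hℵ
  haveI : Infinite ι := Cardinal.aleph0_le_mk_iff.mp hℵι
  have hmk : #ι = #(ι × ℕ) := by
    rw [Cardinal.mk_prod, Cardinal.lift_uzero, Cardinal.mk_nat, Cardinal.lift_aleph0,
      Cardinal.mul_aleph0_eq hℵι]
  obtain ⟨q⟩ : Nonempty (ι ≃ ι × ℕ) := Cardinal.eq.mp hmk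
  -- auxiliary data
  obtain ⟨v, hv⟩ := exists_ne (0 : F)
  obtain ⟨fv, _, hfv⟩ := exists_dual_vector ℝ v (norm_ne_zero_iff.mpr hv)
  let j0 : ι := Classical.arbitrary ι
  let φ : E →ₗ[ℝ] ℝ := B.coord j0
  let e0 : E := B j0
  have hφ : φ e0 = 1 := by simp [φ, e0]
  let Ψ : (ι → ℝ) →ₗ[ℝ] (E →ₗ[ℝ] ℝ) :=
    St8.Psi B (fun i => (((q i).2 : ℝ) + 1) * ‖(B i : E)‖) (fun i => (q i).1)
  let Ξ : (ι → ℝ) →ₗ[ℝ] MultilinearMap ℝ (fun _ : Fin (k + 1) => E) F :=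
    (St8.Phi k φ v) ∘ₗ Ψ
  -- evaluation of Ψ on basis vectors
  have hval : ∀ (h : ι → ℝ) (α : ι) (n : ℕ),
      Ψ h (B (q.symm (α, n))) = (((n : ℝ) + 1) * ‖(B (q.symm (α, n)) : E)‖) * h α := by
    intro h α n
    show St8.Psi B _ _ h (B (q.symm (α, n))) = _
    rw [St8.Psi_apply_basis]
    simp
  -- Ψ h is discontinuous whenever h ≠ 0
  have hdisc : ∀ h : ι → ℝ, h ≠ 0 → ¬Continuous ⇑(Ψ h) := by
    intro h hne hc
    obtain ⟨α, hα⟩ := Function.ne_iff.mp hne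
    simp only [Pi.zero_apply] at hα
    let g : E →L[ℝ] ℝ := ⟨Ψ h, hc⟩
    obtain ⟨n, hn⟩ := exists_nat_gt (‖g‖ / |h α|)
    set x := B (q.symm (α, n)) with hx
    have hxpos : 0 < ‖x‖ := norm_pos_iff.mpr (B.ne_zero _)
    have h1 : |Ψ h x| ≤ ‖g‖ * ‖x‖ := by
      have h0 := g.le_opNorm x
      have : g x = Ψ h x := rfl
      rw [this] at h0
      simpa [Real.norm_eq_abs] using h0
    rw [hval h α n] at h1
    have key : (((n : ℝ) + 1) * |h α|) * ‖x‖ ≤ ‖g‖ * ‖x‖ := by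
      calc (((n : ℝ) + 1) * |h α|) * ‖x‖
          = |(((n : ℝ) + 1) * ‖x‖) * h α| := by
            rw [abs_mul, abs_mul, abs_of_nonneg (by positivity : (0:ℝ) ≤ (n : ℝ) + 1), abs_norm]
            ring
        _ ≤ ‖g‖ * ‖x‖ := h1
    have h3 : ((n : ℝ) + 1) * |h α| ≤ ‖g‖ := le_of_mul_le_mul_right key hxpos
    have h4 : ((n : ℝ) + 1) ≤ ‖g‖ / |h α| := (le_div_iff₀ (abs_pos.mpr hα)).mpr h3
    linarith
  -- continuity transfer
  have htrans : ∀ ψ : E →ₗ[ℝ] ℝ, Continuous ⇑(St8.Phi k φ v ψ) → Continuous ⇑ψ := by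
    intro ψ hcont
    have h1 : Continuous fun x : E => St8.Phi k φ v ψ (Fin.cons x (fun _ => e0)) :=
      hcont.comp (St8.continuous_fin_cons k e0)
    have h2 : ∀ x : E, St8.Phi k φ v ψ (Fin.cons x (fun _ => e0)) = ψ x • v := by
      intro x
      rw [St8.Phi_apply]
      simp [hφ]
    have h3 : Continuous fun x : E => ψ x • v := by
      have hfe := funext h2
      rwa [hfe] at h1
    have h4 : Continuous fun x : E => fv (ψ x • v) := fv.continuous.comp h3
    have h5 : ⇑ψ = fun x => fv (ψ x • v) * ‖v‖⁻¹ := by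
      funext x
      rw [map_smul, hfv]
      have : ‖v‖ ≠ 0 := norm_ne_zero_iff.mpr hv
      field_simp
      simp [smul_eq_mul]
    rw [h5]
    exact h4.mul continuous_const
  -- injectivity facts
  have hΨ0 : ∀ h : ι → ℝ, Ψ h = 0 → h = 0 := by
    intro h h0
    funext α
    have h1 : ((((0:ℕ) : ℝ) + 1) * ‖(B (q.symm (α, 0)) : E)‖) * h α = 0 := by
      rw [← hval h α 0, h0]; simp
    rcases mul_eq_zero.mp h1 with h2 | h2
    · exfalso
      rcases mul_eq_zero.mp h2 with h3 | h3
      · norm_num at h3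
      · exact (norm_ne_zero_iff.mpr (B.ne_zero _)) h3
    · exact h2
  have hΞeval : ∀ (h : ι → ℝ) (x : E), Ξ h (Fin.cons x (fun _ => e0)) = Ψ h x • v := by
    intro h x
    show St8.Phi k φ v (Ψ h) _ = _
    rw [St8.Phi_apply]
    simp [hφ]
  have hΞ0 : ∀ h : ι → ℝ, Ξ h = 0 → h = 0 := by
    intro h h0
    apply hΨ0
    refine LinearMap.ext fun x => ?_
    have h1 := hΞeval h x
    rw [h0] at h1
    simp only [MultilinearMap.zero_apply] at h1
    rcases smul_eq_zero.mp h1.symm with h2 | h2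
    · simpa using h2
    · exact absurd h2 hv
  have hΞinj : Function.Injective Ξ := by
    intro a b hab
    have h0 : Ξ (a - b) = 0 := by rw [map_sub, hab, sub_self]
    exact sub_eq_zero.mp (hΞ0 _ h0)
  -- if Ξ h is continuous then h = 0
  have hΞdisc : ∀ h : ι → ℝ, Continuous ⇑(Ξ h) → h = 0 := by
    intro h hc
    by_contra hne
    exact hdisc h hne (htrans (Ψ h) hc)
  -- the key "two bad elements" lemma
  have hpair : ∀ (c c' : ℝ) (h h' : ι → ℝ), Continuous ⇑(c • T + Ξ h) →
      Continuous ⇑(c' • T + Ξ h') → c' • h - c • h' = 0 := by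
    intro c c' h h' h1 h2
    have e1 : Ξ (c' • h - c • h') = c' • (c • T + Ξ h) - c • (c' • T + Ξ h') := by
      rw [map_sub, map_smul, map_smul, smul_add, smul_add, smul_smul, smul_smul, mul_comm c c']
      abel
    have e2 : Continuous ⇑(c' • (c • T + Ξ h) - c • (c' • T + Ξ h')) := by
      have hco : ⇑(c' • (c • T + Ξ h) - c • (c' • T + Ξ h')) =
          fun x => c' • (c • T + Ξ h) x - c • (c' • T + Ξ h') x := by
        funext x; simp
      rw [hco]
      exact (h1.const_smul c').sub (h2.const_smul c)
    rw [← e1] at e2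
    exact hΞdisc _ e2
  -- the big subspace of "coefficient functions"
  obtain ⟨W1, hW1rank, hW1⟩ : ∃ W1 : Submodule ℝ (ι → ℝ),
      Module.rank ℝ W1 = 2 ^ Module.rank ℝ E ∧
      ∀ h ∈ W1, ∀ c : ℝ, c ≠ 0 → ¬Continuous ⇑(c • T + Ξ h) := by
    have hrankfun : Module.rank ℝ (ι → ℝ) = 2 ^ Module.rank ℝ E := by
      rw [rank_fun_infinite, Cardinal.mk_arrow, Cardinal.mk_real, Cardinal.lift_continuum,
        Cardinal.lift_uzero, Cardinal.continuum, ← Cardinal.power_mul,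
        Cardinal.aleph0_mul_eq hℵι, hκ]
    have h2κ : ℵ₀ ≤ (2 : Cardinal) ^ Module.rank ℝ E := hℵ.trans (Cardinal.cantor _).le
    by_cases hbad : ∃ (h : ι → ℝ) (c : ℝ), c ≠ 0 ∧ Continuous ⇑(c • T + Ξ h)
    · obtain ⟨h0, c0, hc0, hcont0⟩ := hbad
      have hh0 : h0 ≠ 0 := by
        rintro rfl
        rw [map_zero, add_zero] at hcont0
        apply hT
        have hTc : ⇑T = fun x => c0⁻¹ • (c0 • T) x := by
          funext x; simp [smul_smul, inv_mul_cancel₀ hc0]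
        rw [hTc]
        exact hcont0.const_smul c0⁻¹
      obtain ⟨α0, hα0⟩ := Function.ne_iff.mp hh0
      simp only [Pi.zero_apply] at hα0
      refine ⟨LinearMap.ker (LinearMap.proj α0 : (ι → ℝ) →ₗ[ℝ] ℝ), ?_, ?_⟩
      · -- rank of the kernel of a coordinate projection
        set f : (ι → ℝ) →ₗ[ℝ] ℝ := LinearMap.proj α0
        have hrn := LinearMap.lift_rank_range_add_rank_ker f
        have hr1 : Module.rank ℝ (LinearMap.range f) ≤ 1 := by
          have := Submodule.rank_le (LinearMap.range f)
          rwa [Module.rank_self] at this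
        have hker_le : Module.rank ℝ (LinearMap.ker f) ≤ 2 ^ Module.rank ℝ E := by
          rw [← hrankfun]; exact Submodule.rank_le _
        refine le_antisymm hker_le ?_
        have hge : (2 : Cardinal) ^ Module.rank ℝ E ≤ 1 + Module.rank ℝ (LinearMap.ker f) := by
          rw [← hrankfun]
          calc Module.rank ℝ (ι → ℝ)
              = Cardinal.lift.{0} (Module.rank ℝ (ι → ℝ)) := (Cardinal.lift_uzero _).symm
            _ = Cardinal.lift.{u} (Module.rank ℝ (LinearMap.range f)) +
                Cardinal.lift.{0} (Module.rank ℝ (LinearMap.ker f)) := hrn.symm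
            _ ≤ 1 + Module.rank ℝ (LinearMap.ker f) := by
                rw [Cardinal.lift_uzero]
                refine add_le_add_left ?_ _
                calc Cardinal.lift.{u} (Module.rank ℝ (LinearMap.range f))
                    ≤ Cardinal.lift.{u} 1 := Cardinal.lift_le.mpr hr1
                  _ = 1 := Cardinal.lift_one
        rcases le_or_gt ℵ₀ (Module.rank ℝ (LinearMap.ker f)) with hcase | hcase
        · calc (2 : Cardinal) ^ Module.rank ℝ E ≤ 1 + Module.rank ℝ (LinearMap.ker f) := hge
            _ = Module.rank ℝ (LinearMap.ker f) :=
              Cardinal.add_eq_right hcase (le_trans Cardinal.one_le_aleph0 hcase)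
        · exfalso
          have : (1 : Cardinal) + Module.rank ℝ (LinearMap.ker f) < ℵ₀ :=
            Cardinal.add_lt_aleph0 Cardinal.one_lt_aleph0 hcase
          exact absurd (h2κ.trans hge) (not_le.mpr this)
      · intro h hh c hc hcont
        have hp := hpair c0 c h0 h hcont0 hcont
        have hpα := congrFun hp α0
        have hhα : h α0 = 0 := LinearMap.mem_ker.mp hh
        simp only [Pi.sub_apply, Pi.smul_apply, smul_eq_mul, Pi.zero_apply, hhα, mul_zero,
          zero_sub, neg_eq_zero, sub_zero] at hpα
        rcases mul_eq_zero.mp hpα with h' | h'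
        · exact hc h'
        · exact hα0 h'
    · push_neg at hbad
      refine ⟨⊤, ?_, ?_⟩
      · rw [← hrankfun]
        exact rank_top ℝ (ι → ℝ)
      · intro h _ c hc hcont
        exact hbad h c hc hcont
  -- the subspace S
  refine ⟨Submodule.span ℝ {T} ⊔ Submodule.map Ξ W1, ?_, ?_, ?_⟩
  · exact Submodule.mem_sup_left (Submodule.mem_span_singleton_self T)
  · -- the rank computation
    have h2κ : ℵ₀ ≤ Cardinal.lift.{v} ((2 : Cardinal) ^ Module.rank ℝ E) := by
      rw [Cardinal.aleph0_le_lift]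
      exact hℵ.trans (Cardinal.cantor _).le
    have hMrank : Module.rank ℝ (Submodule.map Ξ W1) =
        Cardinal.lift.{v} ((2 : Cardinal) ^ Module.rank ℝ E) := by
      have he := (Submodule.equivMapOfInjective Ξ hΞinj W1).lift_rank_eq
      rw [hW1rank] at he
      refine Cardinal.lift_injective.{u} ?_
      rw [Cardinal.lift_lift]
      exact he.symm
    refine le_antisymm ?_ ?_
    · refine (Submodule.rank_add_le_rank_add_rank _ _).trans ?_
      have h1 : Module.rank ℝ ↥(Submodule.span ℝ {T}) ≤ 1 := by
        have := rank_span_le (R := ℝ) ({T} : Set (MultilinearMap ℝ (fun _ : Fin (k+1) => E) F))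
        simpa using this
      rw [hMrank]
      calc Module.rank ℝ ↥(Submodule.span ℝ {T}) +
            Cardinal.lift.{v} ((2 : Cardinal) ^ Module.rank ℝ E)
          ≤ 1 + Cardinal.lift.{v} ((2 : Cardinal) ^ Module.rank ℝ E) := add_le_add_left h1 _
        _ = Cardinal.lift.{v} ((2 : Cardinal) ^ Module.rank ℝ E) :=
            Cardinal.add_eq_right h2κ (le_trans Cardinal.one_le_aleph0 h2κ)
    · rw [← hMrank]
      exact Submodule.rank_mono le_sup_right
  · -- every nonzero element is discontinuous
    intro R hR hR0 hRc
    obtain ⟨a, ha, b, hb, rfl⟩ := Submodule.mem_sup.mp hR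
    obtain ⟨c, rfl⟩ := Submodule.mem_span_singleton.mp ha
    obtain ⟨h, hh, rfl⟩ := hb
    by_cases hc : c = 0
    · subst hc
      rw [zero_smul, zero_add] at hR0 hRc
      have hne : h ≠ 0 := fun h0 => hR0 (by rw [h0, map_zero])
      exact hdisc h hne (htrans (Ψ h) hRc)
    · exact hW1 h hh c hc hRc
end

section
/- Let E be an infinite-dimensional normed space over ℝ, let F be a normed space over ℝ with dim E > dim F ≥ 1, and let m be a positive integer. Then 2^{dim E} = dim L(^m E; F); consequently the cardinal 2^{dim E} in the (1, 2^{dim E})-lineability of NL(^m E; F) cannot be replaced by any bigger cardinal. -/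
universe u v

open Cardinal

/-- Auxiliary linear embedding of the algebraic dual of `E` into the space of `m`-linear
maps from `E` to `F`, given an index `i0`, a functional `φ` (used in the other slots)
and a vector `w : F`. -/
noncomputable def statement9Aux {E : Type*} {F : Type*} [AddCommGroup E] [Module ℝ E]
    [AddCommGroup F] [Module ℝ F] (m : ℕ) (i0 : Fin m) (φ : E →ₗ[ℝ] ℝ) (w : F) :
    (E →ₗ[ℝ] ℝ) →ₗ[ℝ] MultilinearMap ℝ (fun _ : Fin m => E) F where
  toFun g := (LinearMap.toSpanSingleton ℝ F w).compMultilinearMap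
      ((MultilinearMap.mkPiAlgebra ℝ (Fin m) ℝ).compLinearMap (Function.update (fun _ => φ) i0 g))
  map_add' g h := by
    ext x
    have key : ∀ (ψ : E →ₗ[ℝ] ℝ) (i : Fin m), Function.update (fun _ : Fin m => φ) i0 ψ i (x i)
        = Function.update (fun i : Fin m => φ (x i)) i0 (ψ (x i0)) i := by
      intro ψ i
      rcases eq_or_ne i i0 with rfl | hi
      · simp
      · simp [Function.update_of_ne hi]
    simp only [LinearMap.compMultilinearMap_apply, MultilinearMap.compLinearMap_apply,
      MultilinearMap.mkPiAlgebra_apply, MultilinearMap.add_apply]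
    simp_rw [key]
    rw [Finset.prod_update_of_mem (Finset.mem_univ i0),
        Finset.prod_update_of_mem (Finset.mem_univ i0),
        Finset.prod_update_of_mem (Finset.mem_univ i0)]
    simp [add_mul, add_smul, LinearMap.toSpanSingleton_apply]
  map_smul' c g := by
    ext x
    have key : ∀ (ψ : E →ₗ[ℝ] ℝ) (i : Fin m), Function.update (fun _ : Fin m => φ) i0 ψ i (x i)
        = Function.update (fun i : Fin m => φ (x i)) i0 (ψ (x i0)) i := by
      intro ψ i
      rcases eq_or_ne i i0 with rfl | hi
      · simp
      · simp [Function.update_of_ne hi]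
    simp only [LinearMap.compMultilinearMap_apply, MultilinearMap.compLinearMap_apply,
      MultilinearMap.mkPiAlgebra_apply, MultilinearMap.smul_apply, RingHom.id_apply]
    simp_rw [key]
    rw [Finset.prod_update_of_mem (Finset.mem_univ i0),
        Finset.prod_update_of_mem (Finset.mem_univ i0)]
    simp only [LinearMap.smul_apply, smul_eq_mul, mul_assoc, LinearMap.toSpanSingleton_apply,
      mul_smul]

theorem statement9Aux_apply {E : Type*} {F : Type*} [AddCommGroup E] [Module ℝ E]
    [AddCommGroup F] [Module ℝ F] (m : ℕ) (i0 : Fin m) (φ : E →ₗ[ℝ] ℝ) (w : F)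
    (g : E →ₗ[ℝ] ℝ) (x : Fin m → E) :
    statement9Aux m i0 φ w g x
      = (g (x i0) * ∏ i ∈ Finset.univ \ {i0}, φ (x i)) • w := by
  have key : ∀ (i : Fin m), Function.update (fun _ : Fin m => φ) i0 g i (x i)
      = Function.update (fun i : Fin m => φ (x i)) i0 (g (x i0)) i := by
    intro i
    rcases eq_or_ne i i0 with rfl | hi
    · simp
    · simp [Function.update_of_ne hi]
  simp only [statement9Aux, LinearMap.coe_mk, AddHom.coe_mk,
    LinearMap.compMultilinearMap_apply, MultilinearMap.compLinearMap_apply,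
    MultilinearMap.mkPiAlgebra_apply]
  simp_rw [key]
  rw [Finset.prod_update_of_mem (Finset.mem_univ i0)]
  simp [LinearMap.toSpanSingleton_apply]

/-- Let `E` be an infinite-dimensional real normed space, `F` a real normed space
with `dim E > dim F ≥ 1`, and `m` a positive integer. Then
`2 ^ dim E = dim L(^m E; F)`, so the cardinal `2 ^ dim E` in the `(1, 2 ^ dim E)`-lineability
of `NL(^m E; F)` cannot be replaced by any bigger cardinal. -/
theorem statement9 (E : Type u) (F : Type v) [NormedAddCommGroup E] [NormedSpace ℝ E]
    [NormedAddCommGroup F] [NormedSpace ℝ F]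
    (hE : ¬FiniteDimensional ℝ E)
    (hF : 1 ≤ Module.rank ℝ F)
    (hEF : Cardinal.lift.{u} (Module.rank ℝ F) < Cardinal.lift.{v} (Module.rank ℝ E))
    (m : ℕ) (hm : 0 < m) :
    Cardinal.lift.{v} (2 ^ Module.rank ℝ E) =
      Module.rank ℝ (MultilinearMap ℝ (fun _ : Fin m => E) F) := by
  classical
  have hrE : ℵ₀ ≤ Module.rank ℝ E := by
    by_contra h
    exact hE (Module.rank_lt_aleph0_iff.mp (not_le.mp h))
  -- basis of E
  set ι := Module.Basis.ofVectorSpaceIndex ℝ E with hι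
  set b : Module.Basis ι ℝ E := Module.Basis.ofVectorSpace ℝ E with hb
  have hmkι : #ι = Module.rank ℝ E := b.mk_eq_rank''
  have hιinf : ℵ₀ ≤ #ι := hmkι ▸ hrE
  haveI : Infinite ι := Cardinal.infinite_iff.mpr hιinf
  -- nonzero vector in F
  have hFnt : Nontrivial F := by
    rw [← rank_pos_iff_nontrivial (R := ℝ)]
    exact lt_of_lt_of_le zero_lt_one hF
  obtain ⟨w, hw⟩ := exists_ne (0 : F)
  -- the dual of E has rank 2 ^ rank E
  have hdual : Module.rank ℝ (E →ₗ[ℝ] ℝ) = 2 ^ Module.rank ℝ E := by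
    rw [rank_dual_eq_card_dual_of_aleph0_le_rank hrE,
      ← (b.constr ℕ (M' := ℝ)).toEquiv.cardinal_eq, mk_arrow, Cardinal.mk_real,
      Cardinal.lift_continuum, Cardinal.lift_uzero, ← Cardinal.two_power_aleph0,
      ← Cardinal.power_mul, Cardinal.aleph0_mul_eq hιinf, hmkι]
  -- lower bound
  have hlow : Cardinal.lift.{v} (2 ^ Module.rank ℝ E)
      ≤ Module.rank ℝ (MultilinearMap ℝ (fun _ : Fin m => E) F) := by
    have j : ι := Classical.arbitrary ι
    set i0 : Fin m := ⟨0, hm⟩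
    set φ : E →ₗ[ℝ] ℝ := b.coord j with hφ
    have hφv : φ (b j) = 1 := by simp [hφ]
    have hinj : Function.Injective (statement9Aux m i0 φ w) := by
      rw [injective_iff_map_eq_zero]
      intro g hg
      ext y
      have := congrFun (congrArg DFunLike.coe hg) (Function.update (fun _ : Fin m => b j) i0 y)
      rw [statement9Aux_apply] at this
      simp only [Function.update_self, MultilinearMap.zero_apply] at this
      have hprod : (∏ i ∈ Finset.univ \ {i0}, φ (Function.update (fun _ : Fin m => b j) i0 y i))
          = 1 := by
        apply Finset.prod_eq_one
        intro i hi
        rw [Finset.mem_sdiff, Finset.mem_singleton] at hi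
        rw [Function.update_of_ne hi.2, hφv]
      rw [hprod, mul_one] at this
      rcases smul_eq_zero.mp this with h | h
      · exact h
      · exact absurd h hw
    have := LinearMap.lift_rank_le_of_injective _ hinj
    rw [hdual] at this
    calc Cardinal.lift.{v} (2 ^ Module.rank ℝ E)
        = Cardinal.lift.{max u v} (2 ^ Module.rank ℝ E) := by
          rw [Cardinal.lift_umax.{u, v}]
      _ ≤ Cardinal.lift.{u} (Module.rank ℝ (MultilinearMap ℝ (fun _ : Fin m => E) F)) := this
      _ = Module.rank ℝ (MultilinearMap ℝ (fun _ : Fin m => E) F) := Cardinal.lift_id' _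
  -- upper bound
  have hupp : Module.rank ℝ (MultilinearMap ℝ (fun _ : Fin m => E) F)
      ≤ Cardinal.lift.{v} (2 ^ Module.rank ℝ E) := by
    set R := Cardinal.lift.{v} (Module.rank ℝ E) with hR
    have hRinf : ℵ₀ ≤ R := by
      have := Cardinal.lift_le.{v}.mpr hrE
      rwa [Cardinal.lift_aleph0] at this
    have hpow : Cardinal.lift.{v} (2 ^ Module.rank ℝ E) = 2 ^ R := by
      rw [Cardinal.lift_power, Cardinal.lift_ofNat, hR]
    rw [hpow]
    -- step 1: rank ≤ cardinality
    refine le_trans (rank_le_card ℝ _) ?_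
    -- step 2: a multilinear map is determined by its values on basis vectors
    have hinj2 : Function.Injective
        (fun (f : MultilinearMap ℝ (fun _ : Fin m => E) F) (v : Fin m → ι) =>
          f (fun i => b (v i))) := by
      intro f g hfg
      exact Module.Basis.ext_multilinear (fun _ => b) fun v => congrFun hfg v
    refine le_trans (Cardinal.mk_le_of_injective hinj2) ?_
    rw [mk_arrow]
    -- compute the exponent
    have hexp : #(Fin m → ι) = #ι := by
      rw [mk_arrow, Cardinal.mk_fin, Cardinal.lift_natCast, Cardinal.lift_uzero,
        Cardinal.power_natCast, Cardinal.power_nat_eq hιinf hm]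
    rw [hexp]
    have hliftι : Cardinal.lift.{v} #ι = R := by rw [hmkι, hR]
    rw [hliftι]
    -- bound the cardinality of F
    have hcardF : Cardinal.lift.{u} #F ≤ 2 ^ R := by
      set ιF := Module.Basis.ofVectorSpaceIndex ℝ F
      set bF : Module.Basis ιF ℝ F := Module.Basis.ofVectorSpace ℝ F
      have h1 : #F ≤ #(ιF → ℝ) := by
        refine le_trans (le_of_eq bF.repr.toEquiv.cardinal_eq) ?_
        exact Cardinal.mk_le_of_injective
          (f := fun f : ιF →₀ ℝ => (f : ιF → ℝ)) DFunLike.coe_injective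
      have h2 : #(ιF → ℝ) = 2 ^ (ℵ₀ * #ιF) := by
        rw [mk_arrow, Cardinal.mk_real, Cardinal.lift_continuum, Cardinal.lift_uzero,
          ← Cardinal.two_power_aleph0, ← Cardinal.power_mul]
      have h3 : ℵ₀ * Cardinal.lift.{u} #ιF ≤ R := by
        have hF2 : Cardinal.lift.{u} #ιF ≤ R := by
          rw [bF.mk_eq_rank'', hR]
          exact hEF.le
        calc ℵ₀ * Cardinal.lift.{u} #ιF ≤ R * R :=
              mul_le_mul' hRinf (le_trans hF2 le_rfl)
          _ = R := Cardinal.mul_eq_self hRinf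
      calc Cardinal.lift.{u} #F ≤ Cardinal.lift.{u} (2 ^ (ℵ₀ * #ιF)) := by
            rw [← h2]; exact Cardinal.lift_le.mpr h1
        _ = 2 ^ (ℵ₀ * Cardinal.lift.{u} #ιF) := by
            rw [Cardinal.lift_power, Cardinal.lift_ofNat, Cardinal.lift_mul,
              Cardinal.lift_aleph0]
        _ ≤ 2 ^ R := Cardinal.power_le_power_left (by norm_num) h3
    calc Cardinal.lift.{u} #F ^ R ≤ (2 ^ R) ^ R :=
          Cardinal.power_le_power_right hcardF
      _ = 2 ^ (R * R) := by rw [← Cardinal.power_mul]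
      _ = 2 ^ R := by rw [Cardinal.mul_eq_self hRinf]
  exact le_antisymm hlow hupp
end

section
/- Let E be an infinite-dimensional normed space over ℝ and let m and n be positive integers. Then the set NL(^m E; ℝ) is (n, 2^{dim E})-lineable in L(^m E; ℝ): whenever T_1, …, T_n ∈ NL(^m E; ℝ) are linearly independent with span(T_1,…,T_n) ⊆ NL(^m E; ℝ) ∪ {0}, there exists a subspace S of L(^m E; ℝ) with span(T_1,…,T_n) ⊆ S ⊆ NL(^m E; ℝ) ∪ {0} and dim S = 2^{dim E}. -/
universe u


open Filter Topology

lemma powers_unbounded {α : Type*} (p : Finset α) (v : α → ℝ) (h2 : ∀ i ∈ p, 2 ≤ v i)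
    (hinj : Set.InjOn v p) (c : α → ℝ) (C : ℝ)
    (hb : ∀ k : ℕ, |∑ i ∈ p, c i * v i ^ k| ≤ C) : ∀ i ∈ p, c i = 0 := by
  classical
  by_contra h
  push_neg at h
  obtain ⟨i₁, hi₁p, hi₁⟩ := h
  have hq : (p.filter (fun i => c i ≠ 0)).Nonempty := ⟨i₁, Finset.mem_filter.2 ⟨hi₁p, hi₁⟩⟩
  obtain ⟨i₀, hi₀q, hmax⟩ := Finset.exists_max_image _ v hq
  obtain ⟨hi₀p, hc₀⟩ := Finset.mem_filter.1 hi₀q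
  set V := v i₀ with hV
  have hV2 : (2:ℝ) ≤ V := h2 _ hi₀p
  have hVpos : (0:ℝ) < V := by linarith
  have hlim1 : Tendsto (fun k : ℕ => ∑ i ∈ p, c i * (v i / V) ^ k) atTop (𝓝 (c i₀)) := by
    have h1 : Tendsto (fun k : ℕ => ∑ i ∈ p, c i * (v i / V) ^ k) atTop
        (𝓝 (∑ i ∈ p, if i = i₀ then c i₀ else 0)) := by
      apply tendsto_finset_sum
      intro i hi
      by_cases hii : i = i₀
      · subst hii
        simp only [show v i / V = 1 from div_self hVpos.ne', one_pow, mul_one]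
        exact tendsto_const_nhds
      · simp only [if_neg hii]
        by_cases hci : c i = 0
        · simpa [hci] using tendsto_const_nhds (α := ℕ) (f := atTop) (x := (0:ℝ))
        · have hiq : i ∈ p.filter (fun i => c i ≠ 0) := Finset.mem_filter.2 ⟨hi, hci⟩
          have hle : v i ≤ V := hmax _ hiq
          have hne : v i ≠ V := fun h => hii (hinj hi hi₀p h)
          have hlt : v i / V < 1 := (div_lt_one hVpos).2 (lt_of_le_of_ne hle hne)
          have hge : 0 ≤ v i / V := div_nonneg (by linarith [h2 i hi]) (le_of_lt hVpos)
          have := tendsto_pow_atTop_nhds_zero_of_lt_one hge hlt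
          simpa using this.const_mul (c i)
    simpa [Finset.sum_ite_eq' p i₀ (fun _ => c i₀), hi₀p] using h1
  have hlim2 : Tendsto (fun k : ℕ => ∑ i ∈ p, c i * (v i / V) ^ k) atTop (𝓝 0) := by
    rw [tendsto_zero_iff_abs_tendsto_zero]
    apply squeeze_zero (fun k => abs_nonneg _) (g := fun k => C * (1/V)^k)
    · intro k
      have heq : ∑ i ∈ p, c i * (v i / V) ^ k = (∑ i ∈ p, c i * v i ^ k) * (1/V)^k := by
        rw [Finset.sum_mul]
        refine Finset.sum_congr rfl fun i hi => by rw [div_pow, one_div, inv_pow]; ring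
      rw [heq, abs_mul]
      have h1 : |(1/V:ℝ)^k| = (1/V)^k := abs_of_nonneg (pow_nonneg (by positivity) _)
      rw [h1]
      exact mul_le_mul_of_nonneg_right (hb k) (pow_nonneg (by positivity) _)
    · have : Tendsto (fun k : ℕ => (1/V)^k) atTop (𝓝 0) :=
        tendsto_pow_atTop_nhds_zero_of_lt_one (by positivity) (by rw [div_lt_one hVpos]; linarith)
      simpa using this.const_mul C
  exact hc₀ (tendsto_nhds_unique hlim1 hlim2)


open scoped Classical


variable {E : Type u} [NormedAddCommGroup E] [NormedSpace ℝ E]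

noncomputable def Mk (m' : ℕ) (ψ φ : E →ₗ[ℝ] ℝ) : MultilinearMap ℝ (fun _ : Fin (m'+1) => E) ℝ :=
  (MultilinearMap.mkPiAlgebra ℝ (Fin (m'+1)) ℝ).compLinearMap (Fin.cons φ fun _ => ψ)

lemma Mk_apply (m' : ℕ) (ψ φ : E →ₗ[ℝ] ℝ) (x : Fin (m'+1) → E) :
    Mk m' ψ φ x = φ (x 0) * ∏ i : Fin m', ψ (x i.succ) := by
  simp [Mk, MultilinearMap.compLinearMap_apply, MultilinearMap.mkPiAlgebra_apply,
    Fin.prod_univ_succ]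

noncomputable def Mkl (m' : ℕ) (ψ : E →ₗ[ℝ] ℝ) :
    (E →ₗ[ℝ] ℝ) →ₗ[ℝ] MultilinearMap ℝ (fun _ : Fin (m'+1) => E) ℝ where
  toFun φ := Mk m' ψ φ
  map_add' φ₁ φ₂ := by
    ext x
    simp [Mk_apply, add_mul]
  map_smul' a φ := by
    ext x
    simp [Mk_apply]
    ring

lemma Mk_cons (m' : ℕ) (ψ φ : E →ₗ[ℝ] ℝ) (v b : E) :
    Mk m' ψ φ (Fin.cons v fun _ => b) = φ v * (ψ b) ^ m' := by
  simp [Mk_apply]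




noncomputable def contSub (m : ℕ) : Submodule ℝ (MultilinearMap ℝ (fun _ : Fin m => E) ℝ) where
  carrier := {f | Continuous f}
  add_mem' {f g} hf hg := by
    have : Continuous fun x => f x + g x := Continuous.add hf hg
    exact this
  zero_mem' := by
    have : Continuous fun _ : (Fin m → E) => (0:ℝ) := continuous_const
    exact this
  smul_mem' a f hf := by
    have : Continuous fun x => a • f x := hf.const_smul a
    exact this




def YT (ι : Type u) : Type u := (F : Finset ι) × (↥F.powerset → ℕ)

noncomputable def valA {ι : Type u} (A : Set ι) (y : YT ι) : ℝ :=
  ((2 + y.2 ⟨y.1.filter (· ∈ A), Finset.mem_powerset.2 (Finset.filter_subset _ _)⟩ : ℕ) : ℝ)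

lemma valA_two_le {ι : Type u} (A : Set ι) (y : YT ι) : 2 ≤ valA A y := by
  unfold valA
  exact_mod_cast Nat.le_add_right 2 _

lemma set_wit {ι : Type u} (A B : Set ι) (hAB : A ≠ B) : ∃ i, ¬((i ∈ A) ↔ (i ∈ B)) := by
  by_contra h
  push_neg at h
  exact hAB (Set.ext h)

lemma exists_sep {ι : Type u} (S : Finset (Set ι)) :
    ∃ F : Finset ι, ∀ A ∈ S, ∀ B ∈ S,
      F.filter (· ∈ A) = F.filter (· ∈ B) → A = B := by
  refine ⟨(S ×ˢ S).sup (fun p => if h : p.1 = p.2 then ∅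
    else {Classical.choose (set_wit p.1 p.2 h)}), ?_⟩
  intro A hA B hB hfil
  by_contra hAB
  obtain ⟨i, hiprop, hieq⟩ : ∃ i, ¬((i ∈ A) ↔ (i ∈ B)) ∧ i = Classical.choose (set_wit A B hAB) :=
    ⟨Classical.choose (set_wit A B hAB), Classical.choose_spec (set_wit A B hAB), rfl⟩
  have hmem : i ∈ (S ×ˢ S).sup (fun p : Set ι × Set ι =>
      if h : p.1 = p.2 then (∅ : Finset ι) else {Classical.choose (set_wit p.1 p.2 h)}) := by
    have hp : (A, B) ∈ S ×ˢ S := Finset.mem_product.2 ⟨hA, hB⟩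
    apply Finset.le_sup (f := fun p : Set ι × Set ι =>
      if h : p.1 = p.2 then (∅ : Finset ι) else {Classical.choose (set_wit p.1 p.2 h)}) hp
    simp only [dif_neg hAB]
    rw [hieq]
    exact Finset.mem_singleton_self _
  have := Finset.ext_iff.1 hfil i
  simp only [Finset.mem_filter] at this
  exact hiprop ⟨fun hia => (this.1 ⟨hmem, hia⟩).2, fun hib => (this.2 ⟨hmem, hib⟩).2⟩

lemma good_y {ι : Type u} (S : Finset (Set ι)) :
    ∃ y : YT ι, ∀ A ∈ S, ∀ B ∈ S, valA A y = valA B y → A = B := by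
  obtain ⟨F, hF⟩ := exists_sep S
  obtain ⟨g, hg⟩ := exists_injective_nat ↥F.powerset
  refine ⟨⟨F, g⟩, fun A hA B hB hval => ?_⟩
  apply hF A hA B hB
  unfold valA at hval
  have h1 : (2 + g ⟨F.filter (· ∈ A), Finset.mem_powerset.2 (Finset.filter_subset _ _)⟩ : ℕ)
      = 2 + g ⟨F.filter (· ∈ B), Finset.mem_powerset.2 (Finset.filter_subset _ _)⟩ :=
    Nat.cast_injective hval
  have h2 := hg (Nat.add_left_cancel h1)
  exact congrArg Subtype.val h2

lemma card_YT {ι : Type u} [Infinite ι] : Cardinal.mk (YT ι × ℕ) ≤ Cardinal.mk ι := by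
  have h1 : Cardinal.mk (YT ι) ≤ Cardinal.mk ι := by
    calc Cardinal.mk (YT ι)
        = Cardinal.sum (fun F : Finset ι => Cardinal.mk (↥F.powerset → ℕ)) := Cardinal.mk_sigma _
      _ ≤ Cardinal.sum (fun _ : Finset ι => Cardinal.aleph0) :=
          Cardinal.sum_le_sum _ _ (fun F => Cardinal.mk_le_aleph0)
      _ = Cardinal.mk (Finset ι) * Cardinal.aleph0 := Cardinal.sum_const' _ _
      _ = Cardinal.mk ι * Cardinal.aleph0 := by rw [Cardinal.mk_finset_of_infinite]
      _ = Cardinal.mk ι :=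
          Cardinal.mul_eq_left (Cardinal.aleph0_le_mk ι) (Cardinal.aleph0_le_mk ι)
            Cardinal.aleph0_ne_zero
  calc Cardinal.mk (YT ι × ℕ) = Cardinal.mk (YT ι) * Cardinal.aleph0 := by
        simp [Cardinal.mk_prod, Cardinal.mk_nat, Cardinal.lift_id, Cardinal.lift_aleph0]
    _ ≤ Cardinal.mk ι * Cardinal.aleph0 := mul_le_mul_left h1 _
    _ = Cardinal.mk ι :=
        Cardinal.mul_eq_left (Cardinal.aleph0_le_mk ι) (Cardinal.aleph0_le_mk ι)
          Cardinal.aleph0_ne_zero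

variable {E : Type u} [NormedAddCommGroup E] [NormedSpace ℝ E]

noncomputable def phiA {ι : Type u} (B : Module.Basis ι ℝ E) (j : YT ι × ℕ ↪ ι) (A : Set ι) :
    E →ₗ[ℝ] ℝ :=
  B.constr ℝ (Function.extend j (fun yk => valA A yk.1 ^ yk.2 * ‖B (j yk)‖) 0)

lemma key_indep {ι : Type u} {E : Type u} [NormedAddCommGroup E] [NormedSpace ℝ E]
    (B : Module.Basis ι ℝ E) (i₀ : ι) (j : YT ι × ℕ ↪ ι) (m' : ℕ) (c : Set ι →₀ ℝ)
    (hc : Continuous ⇑(Mkl m' (B.coord i₀)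
      (Finsupp.linearCombination ℝ (phiA B j) c))) : c = 0 := by
  set ψ := B.coord i₀ with hψdef
  set φc := Finsupp.linearCombination ℝ (phiA B j) c with hφcdef
  obtain ⟨C, hC0, hCb⟩ := MultilinearMap.exists_bound_of_continuous _ hc
  have hψ : ψ (B i₀) = 1 := by simp [hψdef]
  have hφc : ∀ (y : YT ι) (k : ℕ), φc (B (j (y,k)))
      = (∑ A ∈ c.support, c A * valA A y ^ k) * ‖B (j (y,k))‖ := by
    intro y k
    rw [hφcdef, Finsupp.linearCombination_apply, Finsupp.sum, LinearMap.coe_sum,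
      Finset.sum_apply, Finset.sum_mul]
    refine Finset.sum_congr rfl fun A hA => ?_
    rw [LinearMap.smul_apply, phiA, Module.Basis.constr_basis,
      j.injective.extend_apply (fun yk : YT ι × ℕ => valA A yk.1 ^ yk.2 * ‖B (j yk)‖) 0 (y,k)]
    simp [mul_assoc]
  have hbound : ∀ (y : YT ι) (k : ℕ),
      |∑ A ∈ c.support, c A * valA A y ^ k| ≤ C * ‖B i₀‖ ^ m' := by
    intro y k
    have h1 := hCb (Fin.cons (B (j (y,k))) fun _ => B i₀)
    have heval : (Mkl m' ψ φc) (Fin.cons (B (j (y,k))) fun _ => B i₀) = φc (B (j (y,k))) := by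
      show Mk m' ψ φc _ = _
      rw [Mk_cons, hψ, one_pow, mul_one]
    have hnorm : ∏ l : Fin (m'+1), ‖(Fin.cons (B (j (y,k))) fun _ => B i₀ : Fin (m'+1) → E) l‖
        = ‖B (j (y,k))‖ * ‖B i₀‖ ^ m' := by
      simp [Fin.prod_univ_succ]
    rw [heval, hnorm, hφc] at h1
    have hpos : 0 < ‖B (j (y,k))‖ := norm_pos_iff.2 (B.ne_zero _)
    rw [Real.norm_eq_abs, abs_mul, abs_of_nonneg hpos.le] at h1
    have := (mul_le_mul_iff_of_pos_right hpos).1 (by linarith [h1] :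
      |∑ A ∈ c.support, c A * valA A y ^ k| * ‖B (j (y,k))‖ ≤ (C * ‖B i₀‖ ^ m') * ‖B (j (y,k))‖)
    exact this
  obtain ⟨y, hy⟩ := good_y c.support
  have hz := powers_unbounded c.support (fun A => valA A y) (fun A _ => valA_two_le A y)
    (fun A hA B hB hval => hy A (Finset.mem_coe.1 hA) B (Finset.mem_coe.1 hB) hval)
    c (C * ‖B i₀‖ ^ m') (fun k => hbound y k)
  ext A
  by_cases hA : A ∈ c.support
  · exact hz A hA
  · exact Finsupp.notMem_support_iff.1 hA


set_option maxHeartbeats 2000000 in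
/-- Let `E` be an infinite-dimensional real normed space and `m`, `n` positive
integers. Then `NL(^m E; ℝ)` is `(n, 2 ^ dim E)`-lineable in `L(^m E; ℝ)`: whenever
`T₁, …, Tₙ ∈ NL(^m E; ℝ)` are linearly independent with `span(T₁, …, Tₙ) ⊆ NL(^m E; ℝ) ∪ {0}`,
there exists a subspace `S` of `L(^m E; ℝ)` with `span(T₁, …, Tₙ) ⊆ S ⊆ NL(^m E; ℝ) ∪ {0}`
and `dim S = 2 ^ dim E`. -/
theorem statement10 (E : Type u) [NormedAddCommGroup E] [NormedSpace ℝ E]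
    (hE : ¬FiniteDimensional ℝ E) (m n : ℕ) (hm : 0 < m) (hn : 0 < n)
    (T : Fin n → MultilinearMap ℝ (fun _ : Fin m => E) ℝ)
    (hTind : LinearIndependent ℝ T)
    (hTnc : ∀ R ∈ Submodule.span ℝ (Set.range T), R ≠ 0 → ¬Continuous ⇑R) :
    ∃ S : Submodule ℝ (MultilinearMap ℝ (fun _ : Fin m => E) ℝ),
      Submodule.span ℝ (Set.range T) ≤ S ∧
      Module.rank ℝ ↥S = 2 ^ Module.rank ℝ E ∧
      ∀ R ∈ S, R ≠ 0 → ¬Continuous ⇑R := by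
  obtain ⟨m', rfl⟩ : ∃ m', m = m' + 1 := ⟨m - 1, (Nat.succ_pred_eq_of_pos hm).symm⟩
  have hTbound : Cardinal.mk ↑(Set.range T) ≤ (n : Cardinal) := by
    simpa using Cardinal.mk_range_le_lift (f := T)
  haveI : Nontrivial E := by
    rcases subsingleton_or_nontrivial E with h | h
    · exact absurd (Module.Finite.of_basis (Module.Basis.empty E (ι := Fin 0))) hE
    · exact h
  set ι := Module.Basis.ofVectorSpaceIndex ℝ E with hιdef
  set B : Module.Basis ι ℝ E := Module.Basis.ofVectorSpace ℝ E with hBdef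
  haveI hinf : Infinite ι := by
    by_contra hfin
    rw [not_infinite_iff_finite] at hfin
    exact hE (Module.Finite.of_basis B)
  have hκ : Cardinal.mk ι = Module.rank ℝ E := B.mk_eq_rank''
  have hκaleph : Cardinal.aleph0 ≤ Cardinal.mk ι := Cardinal.aleph0_le_mk ι
  have h2κaleph : Cardinal.aleph0 ≤ 2 ^ Module.rank ℝ E := by
    rw [← hκ]
    exact hκaleph.trans (Cardinal.cantor _).le
  obtain ⟨i₀⟩ : Nonempty ι := B.index_nonempty
  obtain ⟨j⟩ : Nonempty (YT ι × ℕ ↪ ι) := (Cardinal.le_def _ _).1 card_YT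
  -- notation
  set ψ := B.coord i₀ with hψdef
  set Mfam : Set ι → MultilinearMap ℝ (fun _ : Fin (m'+1) => E) ℝ :=
    fun A => Mkl m' ψ (phiA B j A) with hMfamdef
  set Φ : (Set ι →₀ ℝ) →ₗ[ℝ] MultilinearMap ℝ (fun _ : Fin (m'+1) => E) ℝ :=
    (Mkl m' ψ).comp (Finsupp.linearCombination ℝ (phiA B j)) with hΦdef
  set D : Submodule ℝ (MultilinearMap ℝ (fun _ : Fin (m'+1) => E) ℝ) := contSub (m'+1)
    with hDdef
  set D' : Submodule ℝ (MultilinearMap ℝ (fun _ : Fin (m'+1) => E) ℝ) :=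
    D ⊔ Submodule.span ℝ (Set.range T) with hD'def
  have hΦM : ∀ c : Set ι →₀ ℝ, Φ c = Finsupp.linearCombination ℝ Mfam c := by
    intro c
    rw [hΦdef, LinearMap.comp_apply, Finsupp.linearCombination_apply,
      Finsupp.linearCombination_apply, map_finsuppSum]
    exact Finsupp.sum_congr fun A _ => map_smul _ _ _
  have hkey : ∀ c : Set ι →₀ ℝ, Φ c ∈ D → c = 0 := by
    intro c hc
    exact key_indep B i₀ j m' c hc
  -- K and its finiteness
  set K : Submodule ℝ (Set ι →₀ ℝ) := Submodule.comap Φ D' with hKdef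
  set Vbar := Submodule.map D.mkQ (Submodule.span ℝ (Set.range T)) with hVbardef
  have hKrange : ∀ c ∈ K, D.mkQ (Φ c) ∈ Vbar := by
    intro c hc
    obtain ⟨d, hd, t, ht, hdt⟩ := Submodule.mem_sup.1 hc
    rw [← hdt, map_add]
    have : D.mkQ d = 0 := (Submodule.Quotient.mk_eq_zero D).2 hd
    rw [this, zero_add]
    exact Submodule.mem_map_of_mem ht
  set g' : ↥K →ₗ[ℝ] ↥Vbar :=
    LinearMap.codRestrict Vbar ((D.mkQ.comp Φ).comp K.subtype)
      (fun c => hKrange c.1 c.2) with hg'def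
  have hg'inj : Function.Injective g' := by
    rw [injective_iff_map_eq_zero]
    intro c hc0
    have h1 : D.mkQ (Φ c.1) = 0 := congrArg Subtype.val hc0
    have h2 : Φ c.1 ∈ D := (Submodule.Quotient.mk_eq_zero D).1 h1
    exact Subtype.ext (hkey c.1 h2)
  have hVbarrank : Module.rank ℝ ↥Vbar ≤ n := by
    rw [hVbardef, Submodule.map_span, ← Set.range_comp]
    refine (rank_span_le _).trans ?_
    simpa using Cardinal.mk_range_le_lift (f := ⇑D.mkQ ∘ T)
  have hKrank : Module.rank ℝ ↥K < Cardinal.aleph0 :=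
    lt_of_le_of_lt ((LinearMap.rank_le_of_injective g' hg'inj).trans hVbarrank)
      (Cardinal.nat_lt_aleph0 n)
  haveI : Module.Free ℝ ↥K := Module.Free.of_divisionRing ℝ ↥K
  haveI : FiniteDimensional ℝ ↥K := Module.rank_lt_aleph0_iff.1 hKrank
  obtain ⟨G, hG⟩ : K.FG := (Submodule.fg_iff_finiteDimensional K).2 this
  set F : Finset (Set ι) := G.sup Finsupp.support with hFdef
  have hsupp : ∀ c ∈ K, c.support ⊆ F := by
    intro c hc
    rw [← hG] at hc
    induction hc using Submodule.span_induction with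
    | mem x hx => exact Finset.le_sup (f := Finsupp.support) (Finset.mem_coe.1 hx)
    | zero => simp
    | add x y _ _ hx hy => exact Finsupp.support_add.trans (Finset.union_subset hx hy)
    | smul a x _ hx => exact (Finsupp.support_smul).trans hx
  -- the big family
  set 𝒜 : Set (Set ι) := (↑F : Set (Set ι))ᶜ with h𝒜def
  set M' : ↥𝒜 → MultilinearMap ℝ (fun _ : Fin (m'+1) => E) ℝ :=
    fun A => Mfam A.1 with hM'def
  have hkey' : ∀ c' : ↥𝒜 →₀ ℝ, Finsupp.linearCombination ℝ M' c' ∈ D' → c' = 0 := by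
    intro c' hc'
    set c : Set ι →₀ ℝ := Finsupp.embDomain (Function.Embedding.subtype _) c' with hcdef
    have hlc : Finsupp.linearCombination ℝ Mfam c = Finsupp.linearCombination ℝ M' c' := by
      rw [hcdef, Finsupp.linearCombination_embDomain]
      rfl
    have hcK : c ∈ K := by
      show Φ c ∈ D'
      rw [hΦM, hlc]
      exact hc'
    have hsub := hsupp c hcK
    rw [hcdef, Finsupp.support_embDomain] at hsub
    have : c'.support = ∅ := by
      by_contra hne
      obtain ⟨a, ha⟩ := Finset.nonempty_iff_ne_empty.2 hne
      have : (a : Set ι) ∈ F := hsub (Finset.mem_map_of_mem _ ha)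
      exact a.2 this
    exact Finsupp.support_eq_empty.1 this
  have hM'ind : LinearIndependent ℝ M' := by
    rw [linearIndependent_iff]
    intro c' hc'
    exact hkey' c' (by rw [hc']; exact zero_mem _)
  set W := Submodule.span ℝ (Set.range M') with hWdef
  have hWD' : W ⊓ D' = ⊥ := by
    rw [Submodule.eq_bot_iff]
    rintro x ⟨hxW, hxD'⟩
    obtain ⟨c', hc'⟩ := Finsupp.mem_span_range_iff_exists_finsupp.1 hxW
    have hx : Finsupp.linearCombination ℝ M' c' = x := by
      rw [Finsupp.linearCombination_apply]; exact hc'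
    have := hkey' c' (by rw [hx]; exact hxD')
    rw [← hx, this, map_zero]
  have hTle : Submodule.span ℝ (Set.range T) ≤ D' := le_sup_right
  -- rank of W
  have hWrank : Module.rank ℝ ↥W = 2 ^ Module.rank ℝ E := by
    rw [hWdef, rank_span hM'ind, Cardinal.mk_range_eq _ hM'ind.injective]
    have hsum := Cardinal.mk_sum_compl (↑F : Set (Set ι))
    have hSet : Cardinal.mk (Set ι) = 2 ^ Module.rank ℝ E := by
      rw [Cardinal.mk_set, hκ]
    have hFfin : Cardinal.mk ↥(↑F : Set (Set ι)) < Cardinal.aleph0 :=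
      Cardinal.lt_aleph0_of_finite _
    have h𝒜inf : Cardinal.aleph0 ≤ Cardinal.mk ↥𝒜 := by
      by_contra hlt
      push_neg at hlt
      have := Cardinal.add_lt_aleph0 hFfin hlt
      rw [hsum, hSet] at this
      exact absurd this (not_lt.2 h2κaleph)
    have : Cardinal.mk ↥(↑F : Set (Set ι)) + Cardinal.mk ↥𝒜 = Cardinal.mk ↥𝒜 :=
      Cardinal.add_eq_right h𝒜inf (hFfin.le.trans h𝒜inf)
    rw [this, hSet] at hsum
    exact hsum
  -- final assembly
  refine ⟨W ⊔ Submodule.span ℝ (Set.range T), le_sup_right, ?_, ?_⟩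
  · have hinf0 : W ⊓ Submodule.span ℝ (Set.range T) = ⊥ := by
      rw [Submodule.eq_bot_iff]
      intro x hx
      have : x ∈ W ⊓ D' := ⟨hx.1, hTle hx.2⟩
      rw [hWD'] at this
      exact this
    have h1 := Submodule.rank_sup_add_rank_inf_eq W (Submodule.span ℝ (Set.range T))
    rw [hinf0, rank_bot, add_zero, hWrank] at h1
    have hTrank : Module.rank ℝ ↥(Submodule.span ℝ (Set.range T)) ≤ n := by
      exact (rank_span_le _).trans hTbound
    rw [h1]
    exact Cardinal.add_eq_left h2κaleph
      (hTrank.trans ((Cardinal.nat_lt_aleph0 n).le.trans h2κaleph))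
  · intro R hR hR0 hRc
    obtain ⟨w, hw, t, ht, hwt⟩ := Submodule.mem_sup.1 hR
    have hRD : R ∈ D := hRc
    have hRD' : R ∈ D' := Submodule.mem_sup_left hRD
    have hwD' : w ∈ D' := by
      have : w = R - t := by rw [← hwt, add_sub_cancel_right]
      rw [this]
      exact sub_mem hRD' (hTle ht)
    have hw0 : w = 0 := by
      have : w ∈ W ⊓ D' := ⟨hw, hwD'⟩
      rw [hWD'] at this
      exact this
    have hRt : R = t := by rw [← hwt, hw0, zero_add]
    exact hTnc R (hRt ▸ ht) hR0 hRc
end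

section
/- Let E and F be normed spaces over ℝ with dim E > 𝔠 and dim F > 𝔠, and let τ_0 be an infinite cardinal with τ_0 < dim F. Define NL_{τ_0}(E; F) := { T ∈ NL(E; F) : dim(T(E)) ≤ τ_0 }. Then NL_{τ_0}(E; F) is (τ, 2^{dim E})-lineable in L(E; F) for every cardinal τ < min{dim E, dim F}. -/
universe w u v

/-- A subset `A` of a real vector space `V` is `β`-lineable if `A ∪ {0}` contains a linear
subspace of `V` of Hamel dimension `β`. -/
def Lineable {V : Type w} [AddCommGroup V] [Module ℝ V] (A : Set V) (β : Cardinal.{w}) : Prop :=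
  ∃ S : Submodule ℝ V, Module.rank ℝ ↥S = β ∧ (S : Set V) ⊆ A ∪ {0}

/-- A subset `A` of a real vector space `V` is `(α, β)`-lineable if `A` is `α`-lineable and
every subspace `W ⊆ A ∪ {0}` with `dim W = α` is contained in a subspace `S` with `dim S = β`
and `W ⊆ S ⊆ A ∪ {0}`. -/
def ABLineable {V : Type w} [AddCommGroup V] [Module ℝ V] (A : Set V)
    (α β : Cardinal.{w}) : Prop :=
  Lineable A α ∧
  ∀ W : Submodule ℝ V, Module.rank ℝ ↥W = α → (W : Set V) ⊆ A ∪ {0} →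
    ∃ S : Submodule ℝ V, W ≤ S ∧ Module.rank ℝ ↥S = β ∧ (S : Set V) ⊆ A ∪ {0}

open Cardinal

lemma exists_wild_family (E : Type u) [NormedAddCommGroup E] [NormedSpace ℝ E]
    (hE : Cardinal.aleph0 ≤ Module.rank ℝ E) :
    ∃ (ι : Type u) (Φ : (ι → ℝ) →ₗ[ℝ] (E →ₗ[ℝ] ℝ)),
      Cardinal.mk ι = Module.rank ℝ E ∧ Function.Injective Φ ∧
      ∀ u : ι → ℝ, u ≠ 0 → ¬Continuous ⇑(Φ u) := by
  classical
  let B := Module.Basis.ofVectorSpace ℝ E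
  set ι := Module.Basis.ofVectorSpaceIndex ℝ E with hι
  have hmk : Cardinal.mk ι = Module.rank ℝ E := B.mk_eq_rank''
  have hinf : Infinite ι := by
    rw [Cardinal.infinite_iff, hmk]; exact hE
  have hcard : Cardinal.mk (ι × ℕ) = Cardinal.mk ι := by
    rw [Cardinal.mk_prod, Cardinal.mk_nat, Cardinal.lift_aleph0, Cardinal.lift_id']
    exact Cardinal.mul_eq_left (hmk.symm ▸ hE) ((Cardinal.aleph0_le_mk ι)) Cardinal.aleph0_ne_zero
  obtain ⟨e⟩ := Cardinal.eq.mp hcard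
  let coeff : ι → ℝ := fun i => (((e.symm i).2 : ℝ) + 1) * ‖(B i : E)‖
  have hcoeffpos : ∀ i, 0 < coeff i := by
    intro i
    exact mul_pos (by positivity) (norm_pos_iff.mpr (B.ne_zero i))
  let r : (ι → ℝ) →ₗ[ℝ] (ι → ℝ) :=
  { toFun := fun u i => u (e.symm i).1 * coeff i
    map_add' := by intro u v; funext i; simp [add_mul]
    map_smul' := by intro c u; funext i; simp [mul_assoc]}
  refine ⟨ι, (B.constr ℝ).comp r, hmk, ?_, ?_⟩
  · have heval : ∀ (u : ι → ℝ) (i : ι),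
        (((B.constr ℝ).comp r) u) (B i) = u (e.symm i).1 * coeff i := by
      intro u i
      simp [r, Module.Basis.constr_basis]
    rw [injective_iff_map_eq_zero]
    intro u hu
    funext i₁
    have := heval u (e (i₁, 0))
    rw [hu] at this
    simp only [LinearMap.zero_apply, Equiv.symm_apply_apply] at this
    have hp := hcoeffpos (e (i₁, 0))
    have : u i₁ = 0 := by
      rcases mul_eq_zero.mp this.symm with h | h
      · exact h
      · exact absurd h hp.ne'
    simpa using this
  · intro u hu hcont
    have heval : ∀ (i : ι),
        (((B.constr ℝ).comp r) u) (B i) = u (e.symm i).1 * coeff i := by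
      intro i
      simp [r, Module.Basis.constr_basis]
    obtain ⟨C, hC, hbound⟩ := SemilinearMapClass.bound_of_continuous _ hcont
    obtain ⟨i₁, hi₁'⟩ := Function.ne_iff.mp hu
    have hi₁ : u i₁ ≠ 0 := by simpa using hi₁'
    have habs : 0 < |u i₁| := abs_pos.mpr hi₁
    obtain ⟨n, hn⟩ := exists_nat_gt (C / |u i₁|)
    have hCn : C < n * |u i₁| := by
      rwa [div_lt_iff₀ habs] at hn
    set i := e (i₁, n) with hi
    have hBpos : 0 < ‖(B i : E)‖ := norm_pos_iff.mpr (B.ne_zero i)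
    have h1 := hbound (B i)
    rw [heval i, hi] at h1
    simp only [Equiv.symm_apply_apply] at h1
    rw [Real.norm_eq_abs, abs_mul] at h1
    have hc2 : |coeff (e (i₁, n))| = ((n : ℝ) + 1) * ‖(B i : E)‖ := by
      rw [abs_of_pos (hcoeffpos _)]
      simp only [coeff, hi, Equiv.symm_apply_apply]
    rw [hc2] at h1
    -- h1 : |u i₁| * (((n:ℝ)+1) * ‖B i‖) ≤ C * ‖B i‖
    nlinarith [hBpos, habs]

lemma rank_pi_real (ι : Type u) [Infinite ι] :
    Module.rank ℝ (ι → ℝ) = 2 ^ Cardinal.mk ι := by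
  rw [rank_fun_infinite, Cardinal.mk_arrow, Cardinal.mk_real, Cardinal.lift_continuum,
    Cardinal.lift_id', ← Cardinal.two_power_aleph0, ← Cardinal.power_mul]
  congr 1
  exact Cardinal.mul_eq_right (Cardinal.aleph0_le_mk ι) (Cardinal.aleph0_le_mk ι)
    Cardinal.aleph0_ne_zero

set_option maxHeartbeats 1000000 in
/-- Let `E`, `F` be real normed spaces with `dim E > 𝔠` and `dim F > 𝔠`, and let
`τ₀` be an infinite cardinal with `τ₀ < dim F`. The set
`NL_{τ₀}(E; F) = {T ∈ NL(E; F) : dim T(E) ≤ τ₀}` of non-continuous linear operators whose range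
has dimension at most `τ₀` is `(τ, 2 ^ dim E)`-lineable in `L(E; F)` for every cardinal
`τ < min {dim E, dim F}` (with universe lifts to compare cardinals). -/
theorem statement12 (E : Type u) (F : Type v) [NormedAddCommGroup E] [NormedSpace ℝ E]
    [NormedAddCommGroup F] [NormedSpace ℝ F]
    (hE : Cardinal.continuum < Module.rank ℝ E)
    (hF : Cardinal.continuum < Module.rank ℝ F)
    (τ₀ : Cardinal.{v}) (hτ₀ : Cardinal.aleph0 ≤ τ₀) (hτ₀F : τ₀ < Module.rank ℝ F)
    (τ : Cardinal.{max u v})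
    (hτ : τ < min (Cardinal.lift.{v} (Module.rank ℝ E)) (Cardinal.lift.{u} (Module.rank ℝ F))) :
    ABLineable
      {T : E →ₗ[ℝ] F | ¬Continuous ⇑T ∧ Module.rank ℝ ↥(LinearMap.range T) ≤ τ₀}
      τ (Cardinal.lift.{v} (2 ^ Module.rank ℝ E)) := by
  classical
  set A := {T : E →ₗ[ℝ] F | ¬Continuous ⇑T ∧ Module.rank ℝ ↥(LinearMap.range T) ≤ τ₀} with hA
  have hEinf : Cardinal.aleph0 ≤ Module.rank ℝ E := Cardinal.aleph0_le_continuum.trans hE.le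
  have hτE : τ < Cardinal.lift.{v} (Module.rank ℝ E) := lt_of_lt_of_le hτ (min_le_left _ _)
  have hτF : τ < Cardinal.lift.{u} (Module.rank ℝ F) := lt_of_lt_of_le hτ (min_le_right _ _)
  obtain ⟨ι, Φf, hmkι, hΦinj, hΦdisc⟩ := exists_wild_family E hEinf
  haveI hinfι : Infinite ι := by rw [Cardinal.infinite_iff, hmkι]; exact hEinf
  haveI : Nontrivial F := by
    rw [← rank_pos_iff_nontrivial (R := ℝ)]
    exact lt_of_le_of_lt zero_le hF
  obtain ⟨y, hy⟩ := exists_ne (0 : F)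
  obtain ⟨g, hg1, hgy⟩ := exists_dual_vector ℝ y (norm_ne_zero_iff.mpr hy)
  have hgy0 : g y ≠ 0 := by rw [hgy]; exact norm_ne_zero_iff.mpr hy
  -- Θ : tensoring a functional with y
  let Θ : (E →ₗ[ℝ] ℝ) →ₗ[ℝ] (E →ₗ[ℝ] F) :=
  { toFun := fun f => f.smulRight y
    map_add' := by intro f₁ f₂; ext x; simp [add_smul]
    map_smul' := by intro c f₁; ext x; simp [smul_smul] }
  have hΘapp : ∀ (f : E →ₗ[ℝ] ℝ) (x : E), Θ f x = f x • y := fun f x => rfl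
  have hΘinj : Function.Injective Θ := by
    rw [injective_iff_map_eq_zero]
    intro f hf
    ext x
    have h1 : f x • y = 0 := by rw [← hΘapp, hf]; rfl
    rcases smul_eq_zero.mp h1 with h | h
    · simpa using h
    · exact absurd h hy
  -- postcomposition with g
  let Gc : (E →ₗ[ℝ] F) →ₗ[ℝ] (E →ₗ[ℝ] ℝ) := LinearMap.llcomp ℝ E F ℝ g.toLinearMap
  have hGc : ∀ (T : E →ₗ[ℝ] F) (x : E), Gc T x = g (T x) := fun T x => rfl
  have hGΘ : ∀ f : E →ₗ[ℝ] ℝ, Gc (Θ f) = g y • f := by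
    intro f; ext x
    simp only [hGc, hΘapp, LinearMap.smul_apply, map_smul, smul_eq_mul]
    ring
  have hGcCont : ∀ T : E →ₗ[ℝ] F, Continuous ⇑T → Continuous ⇑(Gc T) := by
    intro T hT
    have : ⇑(Gc T) = ⇑g ∘ ⇑T := rfl
    rw [this]
    exact g.continuous.comp hT
  -- the submodule of continuous functionals
  let C₀ : Submodule ℝ (E →ₗ[ℝ] ℝ) :=
  { carrier := {f | Continuous ⇑f}
    add_mem' := by
      intro a b ha hb
      have : ⇑(a + b) = ⇑a + ⇑b := by funext x; simp
      simpa [Set.mem_setOf_eq, this] using Continuous.add ha hb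
    zero_mem' := by
      have : ⇑(0 : E →ₗ[ℝ] ℝ) = fun _ => (0 : ℝ) := rfl
      simpa [Set.mem_setOf_eq, this] using continuous_const
    smul_mem' := by
      intro c a ha
      have : ⇑(c • a) = fun x => c • a x := rfl
      exact continuous_const.mul ha }
  have hC₀ : ∀ f : E →ₗ[ℝ] ℝ, f ∈ C₀ ↔ Continuous ⇑f := fun f => Iff.rfl
  have hΦC₀ : ∀ u : ι → ℝ, Φf u ∈ C₀ → u = 0 := by
    intro u hu
    by_contra h
    exact hΦdisc u h hu
  have h2κinf : Cardinal.aleph0 ≤ (2 : Cardinal.{u}) ^ Module.rank ℝ E :=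
    hEinf.trans ((Cardinal.cantor _).le.trans (by norm_num))
  constructor
  · -- Lineable A τ
    obtain ⟨τ', hτ'⟩ := Cardinal.mem_range_lift_of_le hτF.le
    have hτ'lt : τ' < Module.rank ℝ F := by
      have : Cardinal.lift.{u} τ' < Cardinal.lift.{u} (Module.rank ℝ F) := by
        rw [hτ']; exact hτF
      exact Cardinal.lift_lt.mp this
    obtain ⟨s, hscard, hsli⟩ :=
      (le_rank_iff_exists_linearIndependent (K := ℝ) (V := F)).mp hτ'lt.le
    have hone : (fun _ : ι => (1 : ℝ)) ≠ 0 := by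
      intro h
      have := congrFun h (Classical.arbitrary ι)
      simpa using this
    set φ : E →ₗ[ℝ] ℝ := Φf (fun _ => 1) with hφ
    have hφdisc : ¬Continuous ⇑φ := hΦdisc _ hone
    have hφne : φ ≠ 0 := by
      intro h
      apply hφdisc
      rw [h]
      exact continuous_zero
    obtain ⟨x₀, hx₀⟩ := DFunLike.ne_iff.mp hφne
    have hx₀' : φ x₀ ≠ 0 := by simpa using hx₀
    let m : F →ₗ[ℝ] (E →ₗ[ℝ] F) :=
    { toFun := fun z => φ.smulRight z
      map_add' := by intro a b; ext t; simp [smul_add]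
      map_smul' := by
        intro c a; ext t
        simp only [LinearMap.smulRight_apply, RingHom.id_apply, LinearMap.smul_apply]
        rw [smul_comm] }
    have hmapp : ∀ (z : F) (t : E), m z t = φ t • z := fun _ _ => rfl
    have hminj : Function.Injective ⇑m := by
      rw [injective_iff_map_eq_zero]
      intro z hz
      have h1 : φ x₀ • z = 0 := by rw [← hmapp, hz]; rfl
      rcases smul_eq_zero.mp h1 with h | h
      · exact absurd h hx₀'
      · exact h
    set Y := Submodule.span ℝ s with hYdef
    have hYrank : Module.rank ℝ ↥Y = τ' := by rw [rank_span_set hsli, hscard]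
    refine ⟨Y.map m, ?_, ?_⟩
    · have he := (Submodule.equivMapOfInjective m hminj Y).lift_rank_eq
      rw [hYrank] at he
      have h2 : Cardinal.lift.{v} (Module.rank ℝ ↥(Y.map m))
          = Cardinal.lift.{v} τ := by
        rw [← he, ← hτ', Cardinal.lift_lift]
      exact Cardinal.lift_injective h2
    · intro x hx
      rw [SetLike.mem_coe] at hx
      obtain ⟨z, hz, rfl⟩ := Submodule.mem_map.mp hx
      by_cases hz0 : z = 0
      · right
        subst hz0
        simp [map_zero]
      · left
        obtain ⟨gz, hgz1, hgzz⟩ := exists_dual_vector ℝ z (norm_ne_zero_iff.mpr hz0)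
        have hznorm : (‖z‖ : ℝ) ≠ 0 := norm_ne_zero_iff.mpr hz0
        constructor
        · intro hc
          have hφeq : ⇑φ = fun t => ‖z‖⁻¹ * gz (m z t) := by
            funext t
            rw [hmapp, map_smul]
            rw [hgzz]
            simp only [smul_eq_mul]
            field_simp
            rfl
          apply hφdisc
          rw [hφeq]
          exact continuous_const.mul (gz.continuous.comp hc)
        · have hle : LinearMap.range (m z) ≤ Submodule.span ℝ {z} := by
            rintro _ ⟨t, rfl⟩
            rw [hmapp]
            exact Submodule.smul_mem _ _ (Submodule.mem_span_singleton_self z)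
          calc Module.rank ℝ ↥(LinearMap.range (m z))
              ≤ Module.rank ℝ ↥(Submodule.span ℝ ({z} : Set F)) := Submodule.rank_mono hle
          _ ≤ 1 := by refine (rank_span_le _).trans ?_; simp
          _ ≤ τ₀ := Cardinal.one_le_aleph0.trans hτ₀
  · -- extension property
    intro W hWrank hWsub
    -- image of W under Gc
    set Wy : Submodule ℝ (E →ₗ[ℝ] ℝ) := W.map Gc with hWy
    have hWyrank : Module.rank ℝ ↥Wy < 2 ^ Module.rank ℝ E := by
      have h1 := lift_rank_map_le Gc W
      rw [hWrank] at h1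
      have h2 : Cardinal.lift.{max u v} (Module.rank ℝ ↥Wy)
          < Cardinal.lift.{max u v} (2 ^ Module.rank ℝ E) := by
        calc Cardinal.lift.{max u v} (Module.rank ℝ ↥Wy) ≤ Cardinal.lift.{u} τ := h1
        _ < Cardinal.lift.{u} (Cardinal.lift.{v} (Module.rank ℝ E)) :=
            Cardinal.lift_lt.mpr hτE
        _ = Cardinal.lift.{max u v} (Module.rank ℝ E) := by
            rw [Cardinal.lift_lift]
        _ ≤ Cardinal.lift.{max u v} (2 ^ Module.rank ℝ E) :=
            Cardinal.lift_le.mpr (Cardinal.cantor _).le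
      exact Cardinal.lift_lt.mp h2
    -- the bad set
    set Bad : Submodule ℝ (ι → ℝ) := Submodule.comap Φf (C₀ ⊔ Wy) with hBad
    have hf2inj : Function.Injective ⇑(C₀.mkQ.comp Φf) := by
      rw [injective_iff_map_eq_zero]
      intro u hu
      apply hΦC₀
      simpa [LinearMap.comp_apply, Submodule.Quotient.mk_eq_zero] using hu
    have hBadsub : ∀ x ∈ Bad, (C₀.mkQ.comp Φf) x ∈ Wy.map C₀.mkQ := by
      intro u hu
      rw [hBad, Submodule.mem_comap] at hu
      obtain ⟨c, hc, w, hw, hcw⟩ := Submodule.mem_sup.mp hu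
      have : C₀.mkQ (Φf u) = C₀.mkQ w := by
        have hc0 : (Submodule.Quotient.mk c : (E →ₗ[ℝ] ℝ) ⧸ C₀) = 0 :=
          (Submodule.Quotient.mk_eq_zero C₀).mpr hc
        rw [← hcw, map_add]
        show Submodule.Quotient.mk c + Submodule.Quotient.mk w = Submodule.Quotient.mk w
        rw [hc0, zero_add]
      rw [LinearMap.comp_apply, this]
      exact Submodule.mem_map_of_mem hw
    have hBadrank : Module.rank ℝ ↥Bad < 2 ^ Module.rank ℝ E := by
      have hinj : Function.Injective ⇑((C₀.mkQ.comp Φf).restrict hBadsub) := by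
        intro a b hab
        have := congrArg (Subtype.val) hab
        simp only [LinearMap.restrict_apply] at this
        exact Subtype.ext (hf2inj this)
      calc Module.rank ℝ ↥Bad ≤ Module.rank ℝ ↥(Wy.map C₀.mkQ) :=
            LinearMap.rank_le_of_injective _ hinj
      _ ≤ Module.rank ℝ ↥Wy := rank_map_le _ _
      _ < 2 ^ Module.rank ℝ E := hWyrank
    obtain ⟨U', hU'⟩ := Submodule.exists_isCompl Bad
    have hpirank : Module.rank ℝ (ι → ℝ) = 2 ^ Module.rank ℝ E := by
      rw [rank_pi_real, hmkι]
    have hU'rank : Module.rank ℝ ↥U' = 2 ^ Module.rank ℝ E := by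
      have hsum := Submodule.rank_sup_add_rank_inf_eq U' Bad
      rw [hU'.symm.sup_eq_top, hU'.symm.inf_eq_bot, rank_top, rank_bot, add_zero, hpirank] at hsum
      by_contra h
      have hle : Module.rank ℝ ↥U' ≤ 2 ^ Module.rank ℝ E := by
        rw [← hpirank]; exact Submodule.rank_le _
      have hlt : Module.rank ℝ ↥U' < 2 ^ Module.rank ℝ E := lt_of_le_of_ne hle h
      exact absurd hsum (Cardinal.add_lt_of_lt h2κinf hlt hBadrank).ne'
    set ΘΦ : (ι → ℝ) →ₗ[ℝ] (E →ₗ[ℝ] F) := Θ.comp Φf with hΘΦ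
    have hΘΦinj : Function.Injective ⇑ΘΦ := hΘinj.comp hΦinj
    set Φsub : Submodule ℝ (E →ₗ[ℝ] F) := U'.map ΘΦ with hΦsub
    have hΦsubrank : Module.rank ℝ ↥Φsub = Cardinal.lift.{v} (2 ^ Module.rank ℝ E) := by
      have he := (Submodule.equivMapOfInjective ΘΦ hΘΦinj U').lift_rank_eq
      rw [hU'rank] at he
      have : Cardinal.lift.{u} (Module.rank ℝ ↥Φsub)
          = Cardinal.lift.{u} (Cardinal.lift.{v} (2 ^ Module.rank ℝ E)) := by
        rw [← he, Cardinal.lift_lift]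
      exact Cardinal.lift_injective this
    refine ⟨W ⊔ Φsub, le_sup_left, ?_, ?_⟩
    · refine le_antisymm ?_ ?_
      · calc Module.rank ℝ ↥(W ⊔ Φsub) ≤ Module.rank ℝ ↥W + Module.rank ℝ ↥Φsub :=
            Submodule.rank_add_le_rank_add_rank _ _
        _ = τ + Cardinal.lift.{v} (2 ^ Module.rank ℝ E) := by rw [hWrank, hΦsubrank]
        _ = Cardinal.lift.{v} (2 ^ Module.rank ℝ E) := by
            apply Cardinal.add_eq_right
            · rw [← Cardinal.lift_aleph0.{v, u}]
              exact Cardinal.lift_le.mpr h2κinf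
            · exact hτE.le.trans (Cardinal.lift_le.mpr (Cardinal.cantor _).le)
      · rw [← hΦsubrank]
        exact Submodule.rank_mono le_sup_right
    · intro x hx
      rw [SetLike.mem_coe, Submodule.mem_sup] at hx
      obtain ⟨w, hw, p, hp, rfl⟩ := hx
      obtain ⟨u, hu, rfl⟩ := Submodule.mem_map.mp hp
      by_cases hu0 : u = 0
      · subst hu0
        rw [map_zero, add_zero]
        exact hWsub hw
      · left
        constructor
        · -- not continuous
          intro hc
          have hmem : Gc (w + ΘΦ u) ∈ C₀ := (hC₀ _).mpr (hGcCont _ hc)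
          have hGw : Gc w ∈ Wy := Submodule.mem_map_of_mem hw
          have heq : g y • Φf u = Gc (w + ΘΦ u) - Gc w := by
            rw [map_add, hΘΦ, LinearMap.comp_apply, hGΘ]
            abel
          have hin : g y • Φf u ∈ C₀ ⊔ Wy := by
            rw [heq]
            exact Submodule.sub_mem _ (Submodule.mem_sup_left hmem)
              (Submodule.mem_sup_right hGw)
          have hin2 : Φf u ∈ C₀ ⊔ Wy := by
            have := Submodule.smul_mem _ (g y)⁻¹ hin
            rwa [smul_smul, inv_mul_cancel₀ hgy0, one_smul] at this
          have : u ∈ Bad ⊓ U' := ⟨Submodule.mem_comap.mpr hin2, hu⟩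
          rw [hU'.inf_eq_bot] at this
          exact hu0 this
        · -- rank of range
          have hrange : LinearMap.range (w + ΘΦ u)
              ≤ LinearMap.range w ⊔ Submodule.span ℝ {y} := by
            rintro z ⟨t, rfl⟩
            have : (w + ΘΦ u) t = w t + Φf u t • y := by
              simp [hΘΦ, LinearMap.add_apply, LinearMap.comp_apply, hΘapp]
            rw [this]
            exact Submodule.add_mem _
              (Submodule.mem_sup_left ⟨t, rfl⟩)
              (Submodule.mem_sup_right
                (Submodule.smul_mem _ _ (Submodule.mem_span_singleton_self y)))
          have hrw : Module.rank ℝ ↥(LinearMap.range w) ≤ τ₀ := by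
            by_cases hw0 : w = 0
            · subst hw0
              rw [LinearMap.range_zero, rank_bot]
              exact zero_le
            · rcases hWsub hw with h | h
              · exact h.2
              · exact absurd h hw0
          calc Module.rank ℝ ↥(LinearMap.range (w + ΘΦ u))
              ≤ Module.rank ℝ ↥(LinearMap.range w ⊔ Submodule.span ℝ {y}) :=
                Submodule.rank_mono hrange
          _ ≤ Module.rank ℝ ↥(LinearMap.range w) + Module.rank ℝ ↥(Submodule.span ℝ {y}) :=
                Submodule.rank_add_le_rank_add_rank _ _
          _ ≤ τ₀ + 1 := by
                refine add_le_add hrw ?_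
                refine (rank_span_le _).trans ?_
                simp
          _ ≤ τ₀ + τ₀ := add_le_add le_rfl (Cardinal.one_le_aleph0.trans hτ₀)
          _ = τ₀ := Cardinal.add_eq_self hτ₀
end

section
/- Let E and F be normed spaces over ℝ with 𝔠 < dim E and dim F > 2^{dim E}, and let m be a positive integer. Then the set NL(^m E; F) is (γ, dim F)-lineable in L(^m E; F) for every cardinal γ < dim E. -/
universe w u v

open Cardinal Filter

section Aux

variable {V' : Type w} [AddCommGroup V'] [Module ℝ V']

/-- In a real vector space, any cardinal `c ≤ rank D` is realized by a submodule `U ≤ D`. -/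
lemma aux_exists_rank_le (D : Submodule ℝ V') {c : Cardinal.{w}}
    (hc : c ≤ Module.rank ℝ D) :
    ∃ U : Submodule ℝ V', U ≤ D ∧ Module.rank ℝ U = c := by
  let b := Module.Basis.ofVectorSpace ℝ D
  have hb : #(Module.Basis.ofVectorSpaceIndex ℝ D) = Module.rank ℝ D := b.mk_eq_rank''
  obtain ⟨s, hs⟩ := Cardinal.le_mk_iff_exists_set.1 (hb ▸ hc)
  have hli : LinearIndependent ℝ (fun i : s => ((b i.1 : D) : V')) := by
    have h1 : LinearIndependent ℝ (fun i : s => b i.1) :=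
      b.linearIndependent.comp _ Subtype.val_injective
    exact h1.map' D.subtype D.ker_subtype
  refine ⟨Submodule.span ℝ (Set.range fun i : s => ((b i.1 : D) : V')), ?_, ?_⟩
  · rw [Submodule.span_le]
    rintro x ⟨i, rfl⟩
    exact (b i.1).2
  · rw [rank_span hli, Cardinal.mk_range_eq _ hli.injective, hs]

/-- Intermediate-subspace lemma: if `W ≤ D`, `rank W < β`, `β ≤ rank D`, `β` infinite, then
there is `S` with `W ≤ S ≤ D` and `rank S = β`. -/
lemma aux_between (W D : Submodule ℝ V') (hWD : W ≤ D) {β : Cardinal.{w}}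
    (hW : Module.rank ℝ W < β) (hβ : β ≤ Module.rank ℝ D) (hβω : ℵ₀ ≤ β) :
    ∃ S : Submodule ℝ V', W ≤ S ∧ S ≤ D ∧ Module.rank ℝ S = β := by
  classical
  set W' : Submodule ℝ D := W.comap D.subtype with hW'def
  have hW' : Module.rank ℝ W' = Module.rank ℝ W :=
    (Submodule.comapSubtypeEquivOfLe hWD).rank_eq
  obtain ⟨K, hK⟩ := W'.exists_isCompl
  have hsum : Module.rank ℝ W' + Module.rank ℝ K = Module.rank ℝ D := by
    have h := Submodule.rank_sup_add_rank_inf_eq W' K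
    rw [hK.sup_eq_top, hK.inf_eq_bot, rank_top, rank_bot, add_zero] at h
    exact h.symm
  have hKβ : β ≤ Module.rank ℝ K := by
    by_contra h
    push_neg at h
    exact absurd (hsum ▸ hβ)
      (not_le.2 (Cardinal.add_lt_of_lt hβω (hW'.symm ▸ hW) h))
  obtain ⟨U, hUK, hU⟩ := aux_exists_rank_le K hKβ
  have hrankS' : Module.rank ℝ ↥(W' ⊔ U) = β := by
    refine le_antisymm ?_ ?_
    · calc Module.rank ℝ ↥(W' ⊔ U) ≤ Module.rank ℝ W' + Module.rank ℝ U :=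
            Submodule.rank_add_le_rank_add_rank W' U
        _ = β := by
            rw [hU, Cardinal.add_eq_right hβω ((hW'.symm ▸ hW).le)]
    · exact hU ▸ Submodule.rank_mono le_sup_right
  refine ⟨(W' ⊔ U).map D.subtype, ?_, Submodule.map_subtype_le D _, ?_⟩
  · have : W = W'.map D.subtype := by
      rw [hW'def, Submodule.map_comap_subtype, inf_eq_right.2 hWD]
    rw [this]
    exact Submodule.map_mono le_sup_left
  · rw [← hrankS']
    exact ((D.equivSubtypeMap (W' ⊔ U)).symm.rank_eq)

/-- On any real normed space of infinite rank, there is a linear functional taking value `1`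
along a sequence tending to `0`. -/
lemma aux_discont (E : Type u) [NormedAddCommGroup E] [NormedSpace ℝ E]
    (h : ℵ₀ ≤ Module.rank ℝ E) :
    ∃ (ψ : E →ₗ[ℝ] ℝ) (z : ℕ → E), (∀ n, ψ (z n) = 1) ∧ Tendsto z atTop (nhds 0) := by
  classical
  let b := Module.Basis.ofVectorSpace ℝ E
  have hι : ℵ₀ ≤ #(Module.Basis.ofVectorSpaceIndex ℝ E) := by rw [b.mk_eq_rank'']; exact h
  haveI : Infinite (Module.Basis.ofVectorSpaceIndex ℝ E) := Cardinal.infinite_iff.2 hι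
  let g : ℕ ↪ Module.Basis.ofVectorSpaceIndex ℝ E := Infinite.natEmbedding _
  set c : ℕ → ℝ := fun n => ((n : ℝ) + 1) * ‖b (g n)‖ with hcdef
  have hbpos : ∀ n, 0 < ‖b (g n)‖ := fun n => norm_pos_iff.2 (b.ne_zero _)
  have hc : ∀ n, c n ≠ 0 := fun n => mul_ne_zero (by positivity) (hbpos n).ne'
  set f : Module.Basis.ofVectorSpaceIndex ℝ E → ℝ := Function.extend g c 0 with hfdef
  refine ⟨b.constr ℝ f, fun n => (c n)⁻¹ • b (g n), fun n => ?_, ?_⟩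
  · rw [map_smul, b.constr_basis, hfdef, g.injective.extend_apply, smul_eq_mul,
      inv_mul_cancel₀ (hc n)]
  · rw [tendsto_zero_iff_norm_tendsto_zero]
    have hnorm : ∀ n : ℕ, ‖(c n)⁻¹ • b (g n)‖ = ((n : ℝ) + 1)⁻¹ := by
      intro n
      have h1 : (0:ℝ) < (n : ℝ) + 1 := by positivity
      rw [norm_smul, Real.norm_eq_abs, abs_inv, hcdef,
        abs_of_pos (mul_pos h1 (hbpos n)), mul_inv,
        mul_assoc, inv_mul_cancel₀ (hbpos n).ne', mul_one]
    simp only [hnorm]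
    simpa [one_div] using tendsto_one_div_add_atTop_nhds_zero_nat (𝕜 := ℝ)

end Aux

/-- Let `E`, `F` be real normed spaces with `𝔠 < dim E` and `dim F > 2 ^ dim E`,
and let `m` be a positive integer. Then `NL(^m E; F)` is `(γ, dim F)`-lineable in `L(^m E; F)`
for every cardinal `γ < dim E` (with universe lifts to compare cardinals). -/
theorem statement14 (E : Type u) (F : Type v) [NormedAddCommGroup E] [NormedSpace ℝ E]
    [NormedAddCommGroup F] [NormedSpace ℝ F]
    (hE : Cardinal.continuum < Module.rank ℝ E)
    (hEF : Cardinal.lift.{v} (2 ^ Module.rank ℝ E) < Cardinal.lift.{u} (Module.rank ℝ F))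
    (m : ℕ) (hm : 0 < m)
    (γ : Cardinal.{max u v}) (hγ : γ < Cardinal.lift.{v} (Module.rank ℝ E)) :
    ABLineable
      {T : MultilinearMap ℝ (fun _ : Fin m => E) F | ¬Continuous ⇑T}
      γ (Cardinal.lift.{u} (Module.rank ℝ F)) := by
  classical
  haveI : NeZero m := ⟨hm.ne'⟩
  set V := MultilinearMap ℝ (fun _ : Fin m => E) F with hVdef
  set A : Set V := {T : V | ¬Continuous ⇑T} with hAdef
  set β : Cardinal.{max u v} := Cardinal.lift.{u} (Module.rank ℝ F) with hβdef
  -- the submodule of continuous multilinear maps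
  let C : Submodule ℝ V :=
  { carrier := {T : V | Continuous ⇑T}
    add_mem' := fun {a b} ha hb => by
      show Continuous ⇑(a + b)
      have hab : ⇑(a + b) = fun x => a x + b x := rfl
      rw [hab]; exact ha.add hb
    zero_mem' := by
      show Continuous ⇑(0 : V)
      have h0 : ⇑(0 : V) = fun _ => (0 : F) := rfl
      rw [h0]; exact continuous_const
    smul_mem' := fun r {a} ha => by
      show Continuous ⇑(r • a)
      have hra : ⇑(r • a) = fun x => r • a x := rfl
      rw [hra]; exact ha.const_smul r }
  have hmemC : ∀ T : V, T ∈ C ↔ Continuous ⇑T := fun T => Iff.rfl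
  -- basic cardinal facts
  have hℵE : ℵ₀ ≤ Module.rank ℝ E := (Cardinal.aleph0_lt_continuum.trans hE).le
  have hγβ : γ < β := by
    refine hγ.trans_le (le_trans (Cardinal.lift_le.2 (Cardinal.cantor _).le) hEF.le)
  have hβω : ℵ₀ ≤ β := by
    have h1 : (ℵ₀ : Cardinal.{max u v}) ≤ Cardinal.lift.{v} (Module.rank ℝ E) := by
      simpa using Cardinal.lift_le.{v, u}.2 hℵE
    exact le_trans h1 (le_trans (Cardinal.lift_le.2 (Cardinal.cantor _).le) hEF.le)
  -- the discontinuous functional and auxiliary data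
  obtain ⟨ψ, z, hz1, hz0⟩ := aux_discont E hℵE
  have hz00 : z 0 ≠ 0 := fun h => by simpa [h] using hz1 0
  obtain ⟨g, _, hgx⟩ := exists_dual_vector ℝ (z 0) (norm_ne_zero_iff.2 hz00)
  set L : E →L[ℝ] ℝ := (‖z 0‖)⁻¹ • g with hLdef
  set e : E := z 0 with hedef
  have hLe : L e = 1 := by
    rw [hLdef]
    simp only [ContinuousLinearMap.smul_apply, smul_eq_mul]
    rw [hgx]
    simp [inv_mul_cancel₀ (norm_ne_zero_iff.2 hz00)]
  -- the scalar multilinear map and the embedding Φ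
  set μ : MultilinearMap ℝ (fun _ : Fin m => E) ℝ :=
    (MultilinearMap.mkPiAlgebra ℝ (Fin m) ℝ).compLinearMap
      (fun i => if i = 0 then ψ else (L : E →ₗ[ℝ] ℝ)) with hμdef
  have hμ : ∀ x : Fin m → E,
      μ x = ∏ i : Fin m, (if i = (0 : Fin m) then ψ else (L : E →ₗ[ℝ] ℝ)) (x i) :=
    fun _ => rfl
  set Φ : F →ₗ[ℝ] V :=
  { toFun := fun v => μ.smulRight v
    map_add' := fun v w => by
      ext x
      show μ x • (v + w) = μ x • v + μ x • w
      rw [smul_add]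
    map_smul' := fun r v => by
      ext x
      show μ x • (r • v) = r • (μ x • v)
      rw [smul_comm] } with hΦdef
  have hΦapp : ∀ (v : F) (x : Fin m → E), Φ v x = μ x • v := fun _ _ => rfl
  -- every nonzero Φ v is discontinuous
  have hΦdisc : ∀ v : F, v ≠ 0 → ¬Continuous ⇑(Φ v) := by
    intro v hv hcont
    have hseq : Tendsto (fun n : ℕ => (fun i : Fin m => if i = 0 then z n else e)) atTop
        (nhds (fun i : Fin m => if i = 0 then 0 else e)) := by
      rw [tendsto_pi_nhds]
      intro i
      by_cases hi : i = 0
      · simpa [hi] using hz0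
      · simp [hi]
    have h2 := (hcont.tendsto _).comp hseq
    have hval : ∀ n : ℕ, Φ v (fun i : Fin m => if i = 0 then z n else e) = v := by
      intro n
      rw [hΦapp, hμ]
      have hone : ∀ i : Fin m, (if i = (0 : Fin m) then ψ else (L : E →ₗ[ℝ] ℝ))
          ((fun j : Fin m => if j = 0 then z n else e) i) = 1 := by
        intro i
        by_cases hi : i = 0 <;> simp [hi, hz1 n, hLe]
      rw [Finset.prod_congr rfl (fun i _ => hone i), Finset.prod_const_one, one_smul]
    have hlim : Φ v (fun i : Fin m => if i = 0 then 0 else e) = 0 := by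
      rw [hΦapp, hμ, Finset.prod_eq_zero (Finset.mem_univ (0 : Fin m)) (by simp), zero_smul]
    rw [hlim] at h2
    have h3 : Tendsto (fun _ : ℕ => v) atTop (nhds (0 : F)) := by
      have : (fun n : ℕ => Φ v (fun i : Fin m => if i = 0 then z n else e))
          = fun _ : ℕ => v := funext hval
      rwa [← this]
    exact hv (tendsto_nhds_unique h3 tendsto_const_nhds).symm
  -- any complement of C has rank at least β
  have hkey : ∀ D : Submodule ℝ V, IsCompl C D → β ≤ Module.rank ℝ D := by
    intro D hCD
    set π := Submodule.projectionOnto D C hCD.symm with hπdef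
    have hinj : Function.Injective (π ∘ₗ Φ) := by
      refine LinearMap.ker_eq_bot.1 (LinearMap.ker_eq_bot'.2 fun v hv0 => ?_)
      by_contra hv
      have hmem : Φ v ∈ LinearMap.ker π := hv0
      rw [Submodule.ker_projectionOnto] at hmem
      exact hΦdisc v hv ((hmemC _).1 hmem)
    have h1 := LinearMap.lift_rank_le_of_injective _ hinj
    rw [hβdef]
    calc Cardinal.lift.{u} (Module.rank ℝ F)
        = Cardinal.lift.{max u v} (Module.rank ℝ F) :=
          (congrFun Cardinal.lift_umax.{v, u} _).symm
      _ ≤ Cardinal.lift.{v} (Module.rank ℝ ↥D) := h1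
      _ = Module.rank ℝ ↥D := Cardinal.lift_id'.{v, max u v} _
  -- membership criterion
  have hsub' : ∀ S : Submodule ℝ V, S ⊓ C = ⊥ → (S : Set V) ⊆ A ∪ {0} := by
    intro S hS x hx
    by_cases hcx : Continuous ⇑x
    · right
      have hxm : x ∈ S ⊓ C := ⟨hx, hcx⟩
      rw [hS] at hxm
      simpa using hxm
    · left; exact hcx
  constructor
  · -- Lineability part: a subspace of rank γ inside A ∪ {0}
    obtain ⟨D0, hD0⟩ := C.exists_isCompl
    have hβD0 : β ≤ Module.rank ℝ D0 := hkey D0 hD0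
    obtain ⟨U, hUD0, hU⟩ := aux_exists_rank_le D0 (hγβ.le.trans hβD0)
    refine ⟨U, hU, hsub' U ?_⟩
    rw [eq_bot_iff]
    calc U ⊓ C ≤ D0 ⊓ C := inf_le_inf_right C hUD0
      _ = ⊥ := by rw [inf_comm]; exact disjoint_iff.1 hD0.disjoint
  · -- the (γ, β) part
    intro W hWrank hWsub
    have hWC : W ⊓ C = ⊥ := by
      rw [eq_bot_iff]
      rintro x ⟨hxW, hxC⟩
      rcases hWsub hxW with h | h
      · exact absurd ((hmemC x).1 hxC) h
      · simpa using h
    obtain ⟨D', hD'⟩ := (W ⊔ C).exists_isCompl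
    set D : Submodule ℝ V := W ⊔ D' with hDdef
    have hCD : IsCompl C D := by
      constructor
      · rw [disjoint_iff, eq_bot_iff]
        rintro x ⟨hxC, hxWD⟩
        obtain ⟨w, hw, d, hd, rfl⟩ := Submodule.mem_sup.1 hxWD
        have hdWC : d ∈ W ⊔ C := by
          have : (w + d) - w ∈ W ⊔ C :=
            Submodule.sub_mem _ (Submodule.mem_sup_right hxC) (Submodule.mem_sup_left hw)
          simpa using this
        have hd0 : d = 0 := by
          have : d ∈ (W ⊔ C) ⊓ D' := ⟨hdWC, hd⟩
          rw [disjoint_iff.1 hD'.disjoint] at this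
          simpa using this
        subst hd0
        have : w ∈ W ⊓ C := ⟨hw, by simpa using hxC⟩
        rw [hWC] at this
        simpa using this
      · rw [codisjoint_iff]
        rw [hDdef, ← sup_assoc, sup_comm C W, sup_assoc, ← sup_assoc, ← codisjoint_iff]
        · exact hD'.codisjoint
    have hWD : W ≤ D := le_sup_left
    have hβD : β ≤ Module.rank ℝ D := hkey D hCD
    obtain ⟨S, hWS, hSD, hSrank⟩ := aux_between W D hWD (hWrank ▸ hγβ) hβD hβω
    refine ⟨S, hWS, hSrank, hsub' S ?_⟩
    rw [eq_bot_iff]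
    calc S ⊓ C ≤ D ⊓ C := inf_le_inf_right C hSD
      _ = ⊥ := by rw [inf_comm]; exact disjoint_iff.1 hCD.disjoint
end

section
/- Let E be an infinite-dimensional Banach space over ℝ, let Γ be an infinite index set, and let H = ℓ_2(Γ). If the set 𝓛(E; H) \ Π_1(E; H) of continuous linear operators from E to H that are not absolutely summing is nonempty, then it is card(Γ)-lineable in the space of continuous linear operators from E to H: (𝓛(E; H) \ Π_1(E; H)) ∪ {0} contains a linear subspace of dimension card(Γ). -/
universe u w

open Function Set
open scoped ENNReal

/-- A continuous linear operator `T : E → F` between real normed spaces is absolutely summing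
if for every sequence `(x j)` in `E` such that `∑ j, |φ (x j)| < ∞` for every continuous linear
functional `φ` on `E`, one has `∑ j, ‖T (x j)‖ < ∞`. -/
def AbsolutelySumming {E : Type u} {F : Type w} [NormedAddCommGroup E] [NormedSpace ℝ E]
    [NormedAddCommGroup F] [NormedSpace ℝ F] (T : E →L[ℝ] F) : Prop :=
  ∀ x : ℕ → E, (∀ φ : E →L[ℝ] ℝ, Summable fun j => |φ (x j)|) →
    Summable fun j => ‖T (x j)‖

namespace Statement15Aux

variable {Γ : Type w}

private lemma twoPos : 0 < (2 : ℝ≥0∞).toReal := by norm_num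

private lemma memℓp_pull (j : Γ → Γ) (hj : Injective j) (f : lp (fun _ : Γ => ℝ) 2) :
    Memℓp (fun a => f (j a)) (2 : ℝ≥0∞) :=
  memℓp_gen (((lp.memℓp f).summable twoPos).comp_injective hj)

private lemma extend_norm_rpow (j : Γ → Γ) (hj : Injective j) (f : lp (fun _ : Γ => ℝ) 2) :
    (fun b => ‖Function.extend j (⇑f) 0 b‖ ^ (2 : ℝ≥0∞).toReal)
      = Function.extend j (fun a => ‖f a‖ ^ (2 : ℝ≥0∞).toReal) 0 := by
  funext b
  rcases em (∃ a, j a = b) with ⟨a, rfl⟩ | hb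
  · rw [hj.extend_apply, hj.extend_apply]
  · rw [Function.extend_apply' _ _ _ hb, Function.extend_apply' _ _ _ hb]
    simp only [Pi.zero_apply, norm_zero]
    exact Real.zero_rpow (by norm_num)

private lemma memℓp_push (j : Γ → Γ) (hj : Injective j) (f : lp (fun _ : Γ => ℝ) 2) :
    Memℓp (Function.extend j (⇑f) 0) (2 : ℝ≥0∞) := by
  apply memℓp_gen
  rw [extend_norm_rpow j hj f]
  exact (summable_extend_zero hj).2 ((lp.memℓp f).summable twoPos)

private noncomputable def pullLM (j : Γ → Γ) (hj : Injective j) :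
    lp (fun _ : Γ => ℝ) 2 →ₗ[ℝ] lp (fun _ : Γ => ℝ) 2 where
  toFun f := ⟨fun a => f (j a), memℓp_pull j hj f⟩
  map_add' f g := by
    apply lp.ext; funext a
    simp only [lp.coeFn_add, Pi.add_apply]
    try rfl
  map_smul' c f := by
    apply lp.ext; funext a
    simp only [lp.coeFn_smul, Pi.smul_apply, RingHom.id_apply]
    try rfl

private lemma pullLM_apply (j : Γ → Γ) (hj : Injective j) (f : lp (fun _ : Γ => ℝ) 2) (a : Γ) :
    (pullLM j hj f) a = f (j a) := rfl

private noncomputable def pushLM (j : Γ → Γ) (hj : Injective j) :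
    lp (fun _ : Γ => ℝ) 2 →ₗ[ℝ] lp (fun _ : Γ => ℝ) 2 where
  toFun f := ⟨Function.extend j (⇑f) 0, memℓp_push j hj f⟩
  map_add' f g := by
    apply lp.ext; funext b
    show Function.extend j (⇑(f + g)) 0 b
      = Function.extend j (⇑f) 0 b + Function.extend j (⇑g) 0 b
    rcases em (∃ a, j a = b) with ⟨a, rfl⟩ | hb
    · rw [hj.extend_apply, hj.extend_apply, hj.extend_apply, lp.coeFn_add, Pi.add_apply]
    · rw [Function.extend_apply' _ _ _ hb, Function.extend_apply' _ _ _ hb,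
        Function.extend_apply' _ _ _ hb]
      simp
  map_smul' c f := by
    apply lp.ext; funext b
    show Function.extend j (⇑(c • f)) 0 b = c • Function.extend j (⇑f) 0 b
    rcases em (∃ a, j a = b) with ⟨a, rfl⟩ | hb
    · rw [hj.extend_apply, hj.extend_apply, lp.coeFn_smul, Pi.smul_apply]
    · rw [Function.extend_apply' _ _ _ hb, Function.extend_apply' _ _ _ hb]
      simp

private lemma pushLM_apply (j : Γ → Γ) (hj : Injective j) (f : lp (fun _ : Γ => ℝ) 2) (b : Γ) :
    (pushLM j hj f) b = Function.extend j (⇑f) 0 b := rfl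

private lemma pull_norm_le (j : Γ → Γ) (hj : Injective j) (f : lp (fun _ : Γ => ℝ) 2) :
    ‖pullLM j hj f‖ ≤ ‖f‖ := by
  apply lp.norm_le_of_tsum_le twoPos (norm_nonneg f)
  rw [lp.norm_rpow_eq_tsum twoPos f]
  exact Summable.tsum_le_tsum_of_inj j hj (fun c _ => by positivity) (fun a => le_rfl)
    ((memℓp_pull j hj f).summable twoPos) ((lp.memℓp f).summable twoPos)

private lemma push_norm_le (j : Γ → Γ) (hj : Injective j) (f : lp (fun _ : Γ => ℝ) 2) :
    ‖pushLM j hj f‖ ≤ ‖f‖ := by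
  apply lp.norm_le_of_tsum_le twoPos (norm_nonneg f)
  rw [lp.norm_rpow_eq_tsum twoPos f]
  calc (∑' b, ‖(pushLM j hj f) b‖ ^ (2 : ℝ≥0∞).toReal)
      = ∑' a, ‖f a‖ ^ (2 : ℝ≥0∞).toReal := by
        rw [show (fun b => ‖(pushLM j hj f) b‖ ^ (2 : ℝ≥0∞).toReal)
              = fun b => ‖Function.extend j (⇑f) 0 b‖ ^ (2 : ℝ≥0∞).toReal from rfl,
           extend_norm_rpow j hj f, tsum_extend_zero hj]
    _ ≤ _ := le_rfl

private noncomputable def pullCLM (j : Γ → Γ) (hj : Injective j) :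
    lp (fun _ : Γ => ℝ) 2 →L[ℝ] lp (fun _ : Γ => ℝ) 2 :=
  (pullLM j hj).mkContinuous 1 (fun f => by simpa using pull_norm_le j hj f)

private noncomputable def pushCLM (j : Γ → Γ) (hj : Injective j) :
    lp (fun _ : Γ => ℝ) 2 →L[ℝ] lp (fun _ : Γ => ℝ) 2 :=
  (pushLM j hj).mkContinuous 1 (fun f => by simpa using push_norm_le j hj f)

private lemma pullCLM_norm_le (j : Γ → Γ) (hj : Injective j) (f : lp (fun _ : Γ => ℝ) 2) :
    ‖pullCLM j hj f‖ ≤ ‖f‖ :=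
  pull_norm_le j hj f

private lemma pull_push_same (j : Γ → Γ) (hj : Injective j) (f : lp (fun _ : Γ => ℝ) 2) :
    pullCLM j hj (pushCLM j hj f) = f := by
  apply lp.ext; funext a
  show Function.extend j (⇑f) 0 (j a) = f a
  exact hj.extend_apply _ _ _

private lemma pull_push_disj (j j' : Γ → Γ) (hj : Injective j) (hj' : Injective j')
    (hd : ∀ a, j a ∉ range j') (f : lp (fun _ : Γ => ℝ) 2) :
    pullCLM j hj (pushCLM j' hj' f) = 0 := by
  apply lp.ext; funext a
  show Function.extend j' (⇑f) 0 (j a) = (0 : lp (fun _ : Γ => ℝ) 2) a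
  rw [Function.extend_apply' _ _ _ (by simpa [Set.mem_range] using hd a)]
  simp

end Statement15Aux

open Statement15Aux in
/-- Let `E` be an infinite-dimensional real Banach space, `Γ` an infinite index
set and `H = ℓ₂(Γ)`. If the set `𝓛(E; H) \ Π₁(E; H)` of continuous linear operators from `E`
to `H` that are not absolutely summing is nonempty, then it is `card Γ`-lineable in the space
of continuous linear operators from `E` to `H`. -/
theorem statement15 (E : Type u) [NormedAddCommGroup E] [NormedSpace ℝ E] [CompleteSpace E]
    (hE : ¬FiniteDimensional ℝ E) (Γ : Type w) [Infinite Γ]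
    (hne : ∃ T : E →L[ℝ] lp (fun _ : Γ => ℝ) 2, ¬AbsolutelySumming T) :
    ∃ S : Submodule ℝ (E →L[ℝ] lp (fun _ : Γ => ℝ) 2),
      Module.rank ℝ ↥S = Cardinal.lift.{u} (Cardinal.mk Γ) ∧
      ∀ T ∈ S, T ≠ 0 → ¬AbsolutelySumming T := by
  classical
  obtain ⟨T, hT⟩ := hne
  have hT0 : T ≠ 0 := by
    rintro rfl
    exact hT (fun x _ => by simpa using summable_zero)
  obtain ⟨x₀, hx₀⟩ : ∃ x₀ : E, T x₀ ≠ 0 := by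
    by_contra h
    push_neg at h
    exact hT0 (ContinuousLinearMap.ext fun x => by simpa using h x)
  have hcard : Cardinal.mk (Γ × Γ) = Cardinal.mk Γ := by
    rw [Cardinal.mk_prod, Cardinal.lift_id]
    exact Cardinal.mul_eq_self (Cardinal.aleph0_le_mk Γ)
  obtain ⟨e⟩ := Cardinal.eq.mp hcard
  set j : Γ → Γ → Γ := fun γ π => e (γ, π) with hjdef
  have hjinj : ∀ γ, Injective (j γ) := by
    intro γ a b hab
    have := e.injective hab
    simpa using congrArg Prod.snd this
  have hdisj : ∀ γ γ', γ ≠ γ' → ∀ a, j γ a ∉ range (j γ') := by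
    rintro γ γ' hgg a ⟨b, hb⟩
    have := e.injective hb
    exact hgg (congrArg Prod.fst this).symm
  set v : Γ → (E →L[ℝ] lp (fun _ : Γ => ℝ) 2) :=
    fun γ => (pushCLM (j γ) (hjinj γ)).comp T with hv
  have key : ∀ (c : Γ →₀ ℝ) (γ₀ : Γ), c γ₀ ≠ 0 → ∀ y : E,
      |c γ₀| * ‖T y‖ ≤ ‖(c.sum fun γ a => a • v γ) y‖ := by
    intro c γ₀ hγ₀ y
    have hpull : pullCLM (j γ₀) (hjinj γ₀) ((c.sum fun γ a => a • v γ) y)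
        = c γ₀ • T y := by
      rw [Finsupp.sum]
      simp only [ContinuousLinearMap.coe_sum', Finset.sum_apply,
        ContinuousLinearMap.coe_smul', Pi.smul_apply, map_sum, map_smul]
      have hterm : ∀ γ ∈ c.support,
          c γ • pullCLM (j γ₀) (hjinj γ₀) (v γ y)
            = if γ = γ₀ then c γ₀ • T y else 0 := by
        intro γ _
        by_cases h : γ = γ₀
        · subst h
          simp [hv, ContinuousLinearMap.comp_apply, pull_push_same]
        · simp [hv, ContinuousLinearMap.comp_apply,
            pull_push_disj (j γ₀) (j γ) (hjinj γ₀) (hjinj γ)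
              (hdisj γ₀ γ (Ne.symm h)), h]
      rw [Finset.sum_congr rfl hterm, Finset.sum_ite_eq' c.support γ₀ (fun _ => c γ₀ • T y)]
      simp [Finsupp.mem_support_iff.mpr hγ₀]
    calc |c γ₀| * ‖T y‖ = ‖c γ₀ • T y‖ := by
          rw [norm_smul, Real.norm_eq_abs]
      _ = ‖pullCLM (j γ₀) (hjinj γ₀) ((c.sum fun γ a => a • v γ) y)‖ := by rw [hpull]
      _ ≤ ‖(c.sum fun γ a => a • v γ) y‖ := pullCLM_norm_le (j γ₀) (hjinj γ₀) _
  have hli : LinearIndependent ℝ v := by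
    rw [linearIndependent_iff]
    intro l hl
    ext γ₀
    by_contra hγ₀
    have h := key l γ₀ (by simpa using hγ₀) x₀
    rw [show (l.sum fun γ a => a • v γ) = Finsupp.linearCombination ℝ v l from
        (Finsupp.linearCombination_apply ℝ l).symm, hl] at h
    simp only [ContinuousLinearMap.zero_apply, norm_zero] at h
    have hpos : 0 < |l γ₀| * ‖T x₀‖ :=
      mul_pos (abs_pos.mpr (by simpa using hγ₀)) (norm_pos_iff.mpr hx₀)
    linarith
  refine ⟨Submodule.span ℝ (Set.range v), ?_, ?_⟩
  · rw [rank_span hli]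
    have h1 := Cardinal.mk_range_eq_of_injective hli.injective
    rw [Cardinal.lift_id'.{w, u}] at h1
    rw [h1, Cardinal.lift_umax.{w, u}]
  · intro T' hT' hT'0
    obtain ⟨c, hc⟩ := Finsupp.mem_span_range_iff_exists_finsupp.mp hT'
    have hcne : c ≠ 0 := by
      rintro rfl
      simp at hc
      exact hT'0 hc.symm
    obtain ⟨γ₀, hγ₀⟩ := Finsupp.ne_iff.mp hcne
    rw [Finsupp.coe_zero, Pi.zero_apply] at hγ₀
    unfold AbsolutelySumming at hT
    push_neg at hT
    obtain ⟨x, hx, hxs⟩ := hT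
    intro hAS
    have hs := hAS x hx
    apply hxs
    have hle : ∀ n, ‖T (x n)‖ ≤ |c γ₀|⁻¹ * ‖T' (x n)‖ := by
      intro n
      have hk := key c γ₀ hγ₀ (x n)
      rw [hc] at hk
      calc ‖T (x n)‖ = |c γ₀|⁻¹ * (|c γ₀| * ‖T (x n)‖) := by
            rw [← mul_assoc, inv_mul_cancel₀ (abs_ne_zero.mpr hγ₀), one_mul]
        _ ≤ |c γ₀|⁻¹ * ‖T' (x n)‖ :=
            mul_le_mul_of_nonneg_left hk (inv_nonneg.mpr (abs_nonneg _))
    exact Summable.of_nonneg_of_le (fun n => norm_nonneg _) hle (hs.mul_left _)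
end
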